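/- arXiv:2501.12044 — 8 statements merged into one kernel-verified Lean document; each statement's English description precedes it below -/
import Mathlib

section
/- Let d ≥ 1 be an integer and let V be a nonempty finite set of points in ℤ^d. For each j ∈ {1,…,d}, let y_j = max{x ∈ ℤ : |{v ∈ V : v_j < x}| ≤ |V|/(2(d+1))} and z_j = min{x ∈ ℤ : |{v ∈ V : v_j > x}| ≤ |V|/(2(d+1))}; these are well-defined integers with y_j ≤ z_j. Then: (a) the axis-parallel box B = ∏_{j=1}^{d} [y_j, z_j] contains at least |V|/(d+1) points of V; (b) ∏_{j=1}^{d} (z_j − y_j + 1) ≥ |V|/(d+1); and (c) there exists a dimension i ∈ {1,…,d} with z_i − y_i + 1 ≥ (|V|/(d+1))^{1/d}. -/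
/-- For a nonempty finite set `V ⊂ ℤ^d`, the per-dimension quantile
coordinates `y_j` (largest `x` with at most `|V|/(2(d+1))` points strictly to the left)
and `z_j` (smallest `x` with at most `|V|/(2(d+1))` points strictly to the right)
are well-defined with `y_j ≤ z_j`; the box `∏ [y_j, z_j]` contains at least `|V|/(d+1)`
points of `V`; its volume `∏ (z_j - y_j + 1)` is at least `|V|/(d+1)`; and some dimension
`i` has `z_i - y_i + 1 ≥ (|V|/(d+1))^{1/d}`. -/
theorem quantile_box_lemma (d : ℕ) (hd : 1 ≤ d)
    (V : Finset (Fin d → ℤ)) (hV : V.Nonempty) :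
    ∃ y z : Fin d → ℤ,
      (∀ j : Fin d, IsGreatest
        {x : ℤ | ((V.filter fun v => v j < x).card : ℝ) ≤ (V.card : ℝ) / (2 * ((d : ℝ) + 1))}
        (y j)) ∧
      (∀ j : Fin d, IsLeast
        {x : ℤ | ((V.filter fun v => x < v j).card : ℝ) ≤ (V.card : ℝ) / (2 * ((d : ℝ) + 1))}
        (z j)) ∧
      (∀ j : Fin d, y j ≤ z j) ∧
      ((V.filter fun v => ∀ j : Fin d, y j ≤ v j ∧ v j ≤ z j).card : ℝ) ≥
        (V.card : ℝ) / ((d : ℝ) + 1) ∧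
      (∏ j : Fin d, ((z j - y j + 1 : ℤ) : ℝ)) ≥ (V.card : ℝ) / ((d : ℝ) + 1) ∧
      (∃ i : Fin d, ((z i - y i + 1 : ℤ) : ℝ) ≥
        ((V.card : ℝ) / ((d : ℝ) + 1)) ^ ((1 : ℝ) / (d : ℝ))) := by
  have hN1 : (1:ℝ) ≤ (V.card : ℝ) := by exact_mod_cast Finset.card_pos.mpr hV
  have hD : (0:ℝ) < (d:ℝ) + 1 := by positivity
  set N : ℝ := (V.card : ℝ) with hN
  set t : ℝ := N / (2 * ((d:ℝ)+1)) with ht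
  have ht0 : (0:ℝ) ≤ t := by positivity
  have htN : t < N := by
    rw [ht, div_lt_iff₀ (by positivity)]; nlinarith
  obtain ⟨v0, hv0⟩ := hV
  -- existence of y j
  have hy_ex : ∀ j : Fin d, ∃ x : ℤ, IsGreatest
      {x : ℤ | ((V.filter fun v => v j < x).card : ℝ) ≤ t} x := by
    intro j
    have hne : (V.image fun v => v j).Nonempty := ⟨v0 j, Finset.mem_image.mpr ⟨v0, hv0, rfl⟩⟩
    have hmem : ((V.filter fun v => v j < (V.image fun v => v j).min' hne).card : ℝ) ≤ t := by
      have he : V.filter (fun v => v j < (V.image fun v => v j).min' hne) = ∅ := by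
        rw [Finset.filter_eq_empty_iff]
        intro v hv
        have hvj : v j ∈ V.image (fun v => v j) := Finset.mem_image.mpr ⟨v, hv, rfl⟩
        have := Finset.min'_le _ (v j) hvj
        exact not_lt.mpr this
      rw [he]; simpa using ht0
    have hbdd : ∀ x : ℤ, ((V.filter fun v => v j < x).card : ℝ) ≤ t →
        x ≤ (V.image fun v => v j).max' hne := by
      intro x hx
      by_contra hc
      push_neg at hc
      have he : V.filter (fun v => v j < x) = V := by
        rw [Finset.filter_eq_self]
        intro v hv
        have hvj : v j ∈ V.image (fun v => v j) := Finset.mem_image.mpr ⟨v, hv, rfl⟩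
        have := Finset.le_max' _ (v j) hvj
        exact lt_of_le_of_lt this hc
      rw [he] at hx
      exact absurd hx (not_le.mpr htN)
    obtain ⟨x, hx, hmax⟩ := Int.exists_greatest_of_bdd ⟨_, hbdd⟩ ⟨_, hmem⟩
    exact ⟨x, hx, fun w hw => hmax w hw⟩
  have hz_ex : ∀ j : Fin d, ∃ x : ℤ, IsLeast
      {x : ℤ | ((V.filter fun v => x < v j).card : ℝ) ≤ t} x := by
    intro j
    have hne : (V.image fun v => v j).Nonempty := ⟨v0 j, Finset.mem_image.mpr ⟨v0, hv0, rfl⟩⟩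
    have hmem : ((V.filter fun v => (V.image fun v => v j).max' hne < v j).card : ℝ) ≤ t := by
      have he : V.filter (fun v => (V.image fun v => v j).max' hne < v j) = ∅ := by
        rw [Finset.filter_eq_empty_iff]
        intro v hv
        have hvj : v j ∈ V.image (fun v => v j) := Finset.mem_image.mpr ⟨v, hv, rfl⟩
        have := Finset.le_max' _ (v j) hvj
        exact not_lt.mpr this
      rw [he]; simpa using ht0
    have hbdd : ∀ x : ℤ, ((V.filter fun v => x < v j).card : ℝ) ≤ t →
        (V.image fun v => v j).min' hne ≤ x := by
      intro x hx
      by_contra hc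
      push_neg at hc
      have he : V.filter (fun v => x < v j) = V := by
        rw [Finset.filter_eq_self]
        intro v hv
        have hvj : v j ∈ V.image (fun v => v j) := Finset.mem_image.mpr ⟨v, hv, rfl⟩
        have := Finset.min'_le _ (v j) hvj
        exact lt_of_lt_of_le hc this
      rw [he] at hx
      exact absurd hx (not_le.mpr htN)
    obtain ⟨x, hx, hmin⟩ := Int.exists_least_of_bdd ⟨_, hbdd⟩ ⟨_, hmem⟩
    exact ⟨x, hx, fun w hw => hmin w hw⟩
  choose y hy using hy_ex
  choose z hz using hz_ex
  have hyc : ∀ j, ((V.filter fun v => v j < y j).card : ℝ) ≤ t := fun j => (hy j).1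
  have hzc : ∀ j, ((V.filter fun v => z j < v j).card : ℝ) ≤ t := fun j => (hz j).1
  -- y j ≤ z j
  have hyz : ∀ j, y j ≤ z j := by
    intro j
    by_contra hc
    push_neg at hc
    have hsub : V ⊆ V.filter (fun v => v j < y j) ∪ V.filter (fun v => z j < v j) := by
      intro v hv
      rw [Finset.mem_union, Finset.mem_filter, Finset.mem_filter]
      by_cases h : v j < y j
      · exact Or.inl ⟨hv, h⟩
      · exact Or.inr ⟨hv, by omega⟩
    have h1 : V.card ≤ (V.filter (fun v => v j < y j)).card + (V.filter (fun v => z j < v j)).card :=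
      le_trans (Finset.card_le_card hsub) (Finset.card_union_le _ _)
    have h2 : N ≤ t + t := by
      have := hyc j; have := hzc j
      have : (V.card : ℝ) ≤ ((V.filter (fun v => v j < y j)).card : ℝ) +
          ((V.filter (fun v => z j < v j)).card : ℝ) := by exact_mod_cast h1
      linarith [hyc j, hzc j]
    have hd1 : (1:ℝ) ≤ (d:ℝ) := by exact_mod_cast hd
    have h3 : N / (2*((d:ℝ)+1)) * (2*((d:ℝ)+1)) = N := div_mul_cancel₀ _ (by positivity)
    rw [ht] at h2
    nlinarith [mul_le_mul_of_nonneg_right h2 (by positivity : (0:ℝ) ≤ 2*((d:ℝ)+1)), h3, hN1, hd1]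
  -- (a) box contains many points
  have houtside : ((V.filter fun v => ¬ ∀ j : Fin d, y j ≤ v j ∧ v j ≤ z j).card : ℝ)
      ≤ (d:ℝ) * (2 * t) := by
    have hsub : V.filter (fun v => ¬ ∀ j : Fin d, y j ≤ v j ∧ v j ≤ z j) ⊆
        Finset.univ.biUnion (fun j : Fin d =>
          V.filter (fun v => v j < y j) ∪ V.filter (fun v => z j < v j)) := by
      intro v hv
      rw [Finset.mem_filter] at hv
      obtain ⟨hvV, hvn⟩ := hv
      push_neg at hvn
      obtain ⟨j, hj⟩ := hvn
      rw [Finset.mem_biUnion]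
      refine ⟨j, Finset.mem_univ j, ?_⟩
      rw [Finset.mem_union, Finset.mem_filter, Finset.mem_filter]
      by_cases h : v j < y j
      · exact Or.inl ⟨hvV, h⟩
      · exact Or.inr ⟨hvV, by omega⟩
    have h1 : (V.filter (fun v => ¬ ∀ j : Fin d, y j ≤ v j ∧ v j ≤ z j)).card ≤
        ∑ j : Fin d, ((V.filter (fun v => v j < y j)).card +
          (V.filter (fun v => z j < v j)).card) := by
      refine le_trans (Finset.card_le_card hsub) (le_trans (Finset.card_biUnion_le) ?_)
      exact Finset.sum_le_sum (fun j _ => Finset.card_union_le _ _)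
    have h2 : ((V.filter (fun v => ¬ ∀ j : Fin d, y j ≤ v j ∧ v j ≤ z j)).card : ℝ) ≤
        ∑ j : Fin d, (((V.filter (fun v => v j < y j)).card : ℝ) +
          ((V.filter (fun v => z j < v j)).card : ℝ)) := by exact_mod_cast h1
    refine le_trans h2 ?_
    calc ∑ j : Fin d, (((V.filter (fun v => v j < y j)).card : ℝ) +
          ((V.filter (fun v => z j < v j)).card : ℝ))
        ≤ ∑ _j : Fin d, (2 * t) := Finset.sum_le_sum (fun j _ => by linarith [hyc j, hzc j])
      _ = (d:ℝ) * (2 * t) := by simp [Finset.sum_const, mul_comm]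
  have hinside : ((V.filter fun v => ∀ j : Fin d, y j ≤ v j ∧ v j ≤ z j).card : ℝ)
      ≥ N / ((d:ℝ) + 1) := by
    have hsplit : (V.filter fun v => ∀ j : Fin d, y j ≤ v j ∧ v j ≤ z j).card +
        (V.filter fun v => ¬ ∀ j : Fin d, y j ≤ v j ∧ v j ≤ z j).card = V.card :=
      Finset.card_filter_add_card_filter_not _
    have hsplit' : ((V.filter fun v => ∀ j : Fin d, y j ≤ v j ∧ v j ≤ z j).card : ℝ) +
        ((V.filter fun v => ¬ ∀ j : Fin d, y j ≤ v j ∧ v j ≤ z j).card : ℝ) = N := by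
      rw [hN]; exact_mod_cast hsplit
    have harith : N - (d:ℝ) * (2 * t) = N / ((d:ℝ) + 1) := by
      rw [ht]; field_simp; ring
    linarith
  -- (b) volume bound
  have hvol : (∏ j : Fin d, ((z j - y j + 1 : ℤ) : ℝ)) ≥ N / ((d:ℝ) + 1) := by
    have hsub2 : V.filter (fun v => ∀ j : Fin d, y j ≤ v j ∧ v j ≤ z j) ⊆ Finset.Icc y z := by
      intro v hv
      rw [Finset.mem_filter] at hv
      rw [Finset.mem_Icc]
      exact ⟨fun j => (hv.2 j).1, fun j => (hv.2 j).2⟩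
    have hcard : ((Finset.Icc y z).card : ℝ) = ∏ j : Fin d, ((z j - y j + 1 : ℤ) : ℝ) := by
      rw [Pi.card_Icc]
      push_cast
      refine Finset.prod_congr rfl (fun j _ => ?_)
      rw [Int.card_Icc]
      have h0 : (0:ℤ) ≤ z j + 1 - y j := by have := hyz j; omega
      rw [← Int.cast_natCast (R := ℝ), Int.toNat_of_nonneg h0]
      push_cast
      ring
    have hle : ((V.filter fun v => ∀ j : Fin d, y j ≤ v j ∧ v j ≤ z j).card : ℝ) ≤
        ((Finset.Icc y z).card : ℝ) := by exact_mod_cast Finset.card_le_card hsub2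
    rw [hcard] at hle
    linarith
  -- (c)
  refine ⟨y, z, hy, hz, hyz, hinside, hvol, ?_⟩
  by_contra hc
  push_neg at hc
  set A : ℝ := N / ((d:ℝ) + 1) with hA
  have hA0 : 0 < A := by positivity
  have hpos : ∀ j : Fin d, (0:ℝ) < ((z j - y j + 1 : ℤ) : ℝ) := by
    intro j
    have := hyz j
    exact_mod_cast (by omega : (0:ℤ) < z j - y j + 1)
  have hlt : (∏ j : Fin d, ((z j - y j + 1 : ℤ) : ℝ)) <
      ∏ _j : Fin d, A ^ ((1:ℝ)/(d:ℝ)) := by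
    refine Finset.prod_lt_prod_of_nonempty (fun j _ => hpos j) (fun j _ => hc j) ?_
    exact Finset.univ_nonempty_iff.mpr ⟨⟨0, hd⟩⟩
  have heq : (∏ _j : Fin d, A ^ ((1:ℝ)/(d:ℝ))) = A := by
    rw [Finset.prod_const, Finset.card_univ, Fintype.card_fin,
      ← Real.rpow_natCast (A ^ ((1:ℝ)/(d:ℝ))) d, ← Real.rpow_mul hA0.le]
    rw [one_div, inv_mul_cancel₀ (by positivity : ((d:ℝ)) ≠ 0), Real.rpow_one]
  rw [heq] at hlt
  linarith
end

section
/- (Binary Partition Lemma) Let d ≥ 2 and c ≥ 1 be integers, and let V be a finite set of points in ℕ^d such that 8(d+1)·c ≤ (|V|/(d+1))^{1/d}. Then there exist a dimension i ∈ {1,…,d} and an integer x such that, setting V_left = {v ∈ V : v_i ≤ x − 1}, V_right = {v ∈ V : v_i ≥ x + c}, and S = {v ∈ V : x ≤ v_i ≤ x + c − 1}, one has: |V_left| ≥ |V|/(4(d+1)), |V_right| ≥ |V|/(4(d+1)), and |S| ≤ 2c·(1+d)^{1/d}·|V|^{1 − 1/d}. -/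
open Finset

lemma divider_sum_bound (d c : ℕ) (i0 : Fin d) (V : Finset (Fin d → ℕ)) (X : Finset ℤ) :
    ∑ x ∈ X, (V.filter fun v => x ≤ (v i0:ℤ) ∧ (v i0:ℤ) ≤ x + (c:ℤ) - 1).card
      ≤ V.card * c := by
  classical
  have hswap : ∑ x ∈ X, (V.filter fun v => x ≤ (v i0:ℤ) ∧ (v i0:ℤ) ≤ x + (c:ℤ) - 1).card
      = ∑ v ∈ V, (X.filter fun x => x ≤ (v i0:ℤ) ∧ (v i0:ℤ) ≤ x + (c:ℤ) - 1).card := by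
    simp_rw [Finset.card_filter]
    exact Finset.sum_comm
  rw [hswap]
  calc ∑ v ∈ V, (X.filter fun x => x ≤ (v i0:ℤ) ∧ (v i0:ℤ) ≤ x + (c:ℤ) - 1).card
      ≤ ∑ _v ∈ V, c := by
        apply Finset.sum_le_sum
        intro v _
        have hsub : (X.filter fun x => x ≤ (v i0:ℤ) ∧ (v i0:ℤ) ≤ x + (c:ℤ) - 1)
            ⊆ Finset.Icc ((v i0:ℤ) - c + 1) ((v i0 : ℕ):ℤ) := by
          intro y hy
          rw [Finset.mem_filter] at hy
          rw [Finset.mem_Icc]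
          clear hswap
          omega
        have hIcc : (Finset.Icc ((v i0:ℤ) - c + 1) ((v i0 : ℕ):ℤ)).card = c := by
          rw [Int.card_Icc]
          clear hswap
          omega
        exact le_of_le_of_eq (Finset.card_le_card hsub) hIcc
    _ = V.card * c := by rw [Finset.sum_const, smul_eq_mul]

lemma rhs_eq (c d n : ℕ) (hd : 0 < d) (hn : 0 < n) :
    2 * (c : ℝ) * (1 + (d : ℝ)) ^ ((1 : ℝ) / (d : ℝ)) * (n : ℝ) ^ (1 - (1 : ℝ) / (d : ℝ))
      = 2 * (c:ℝ) * (n:ℝ) / (((n:ℝ) / ((d:ℝ)+1)) ^ ((1:ℝ)/(d:ℝ))) := by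
  have hnR : (0:ℝ) < n := by exact_mod_cast hn
  have h1 : (n:ℝ) ^ (1 - (1:ℝ)/(d:ℝ)) = (n:ℝ) / (n:ℝ) ^ ((1:ℝ)/(d:ℝ)) := by
    rw [Real.rpow_sub hnR, Real.rpow_one]
  have h2 : ((n:ℝ) / ((d:ℝ)+1)) ^ ((1:ℝ)/(d:ℝ))
      = (n:ℝ) ^ ((1:ℝ)/(d:ℝ)) / ((d:ℝ)+1) ^ ((1:ℝ)/(d:ℝ)) :=
    Real.div_rpow (le_of_lt hnR) (by positivity) _
  have h3 : (0:ℝ) < (n:ℝ) ^ ((1:ℝ)/(d:ℝ)) := Real.rpow_pos_of_pos hnR _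
  have h4 : (0:ℝ) < ((d:ℝ)+1) ^ ((1:ℝ)/(d:ℝ)) := Real.rpow_pos_of_pos (by positivity) _
  have h5 : (1:ℝ) + (d:ℝ) = (d:ℝ) + 1 := by ring
  rw [h1, h2, h5]
  field_simp

lemma rpow_one_div_pow_self (z : ℝ) (hz : 0 ≤ z) (d : ℕ) (hd : d ≠ 0) :
    (z ^ ((1:ℝ)/(d:ℝ))) ^ d = z := by
  rw [← Real.rpow_natCast (z ^ ((1:ℝ)/(d:ℝ))) d, ← Real.rpow_mul hz,
    one_div_mul_cancel (by exact_mod_cast hd), Real.rpow_one]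


set_option maxHeartbeats 1600000 in
/-- **Binary Partition Lemma.** For a finite set `V ⊂ ℕ^d` with
`8(d+1)·c ≤ (|V|/(d+1))^{1/d}`, there is a dimension `i` and an integer `x` such that the
`c`-divider `π(i,x)` leaves at least `|V|/(4(d+1))` points on each side, and the boundary
part has at most `2c·(1+d)^{1/d}·|V|^{1-1/d}` points. -/
theorem binary_partition_lemma (d c : ℕ) (hd : 2 ≤ d) (hc : 1 ≤ c)
    (V : Finset (Fin d → ℕ))
    (hbig : 8 * ((d : ℝ) + 1) * (c : ℝ) ≤ ((V.card : ℝ) / ((d : ℝ) + 1)) ^ ((1 : ℝ) / (d : ℝ))) :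
    ∃ (i : Fin d) (x : ℤ),
      ((V.filter fun v => (v i : ℤ) ≤ x - 1).card : ℝ) ≥ (V.card : ℝ) / (4 * ((d : ℝ) + 1)) ∧
      ((V.filter fun v => x + (c : ℤ) ≤ (v i : ℤ)).card : ℝ) ≥
        (V.card : ℝ) / (4 * ((d : ℝ) + 1)) ∧
      ((V.filter fun v => x ≤ (v i : ℤ) ∧ (v i : ℤ) ≤ x + (c : ℤ) - 1).card : ℝ) ≤
        2 * (c : ℝ) * (1 + (d : ℝ)) ^ ((1 : ℝ) / (d : ℝ)) *
          (V.card : ℝ) ^ (1 - (1 : ℝ) / (d : ℝ)) := by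
  classical
  set n := V.card with hn
  set w : ℝ := ((n : ℝ) / ((d : ℝ) + 1)) ^ ((1 : ℝ) / (d : ℝ)) with hwdef
  have hdn : (0:ℕ) < d := by omega
  have hd0 : (0:ℝ) < d := by exact_mod_cast hdn
  have hc0 : (1:ℝ) ≤ c := by exact_mod_cast hc
  have hd3 : (3:ℝ) ≤ (d:ℝ) + 1 := by
    have : (2:ℝ) ≤ d := by exact_mod_cast hd
    linarith
  have hw24 : 24 * (c:ℝ) ≤ w := by
    calc (24:ℝ) * c = 8 * 3 * c := by ring
    _ ≤ 8 * ((d:ℝ)+1) * c := by nlinarith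
    _ ≤ w := hbig
  have hwpos : 0 < w := by nlinarith
  have hn0 : 0 < n := by
    by_contra h
    have : n = 0 := by omega
    rw [hwdef, this] at hwpos
    simp only [Nat.cast_zero, zero_div] at hwpos
    rw [Real.zero_rpow (by positivity)] at hwpos
    exact lt_irrefl _ hwpos
  have hnR : (0:ℝ) < n := by exact_mod_cast hn0
  set t : ℝ := (n : ℝ) / (4 * ((d:ℝ) + 1)) with htdef
  have ht0 : 0 < t := by positivity
  have htn : t ≤ (n:ℝ) := by
    rw [htdef, div_le_iff₀ (by positivity)]
    nlinarith
  -- bound on coordinates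
  set B : Fin d → ℕ := fun i => V.sup fun v => v i with hB
  have hBle : ∀ i, ∀ v ∈ V, v i ≤ B i := fun i v hv => Finset.le_sup (f := fun v => v i) hv
  -- existence for Nat.find
  have hexist : ∀ i : Fin d, ∃ x : ℕ, t ≤ ((V.filter fun v => v i ≤ x).card : ℝ) := by
    intro i
    refine ⟨B i, ?_⟩
    rw [Finset.filter_true_of_mem (fun v hv => hBle i v hv)]
    exact htn
  set a : Fin d → ℕ := fun i => Nat.find (hexist i) with ha_def
  set b : Fin d → ℕ := fun i =>
    Nat.findGreatest (fun x => t ≤ ((V.filter fun v => x ≤ v i).card : ℝ)) (B i) with hb_def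
  have ha : ∀ i, t ≤ ((V.filter fun v => v i ≤ a i).card : ℝ) := fun i => Nat.find_spec (hexist i)
  have ha' : ∀ i, ((V.filter fun v => v i < a i).card : ℝ) < t := by
    intro i
    rcases Nat.eq_zero_or_pos (a i) with h0 | hpos
    · rw [h0]
      simp only [Nat.not_lt_zero]
      simpa using ht0
    · have hmin := Nat.find_min (hexist i) (m := a i - 1)
        (show a i - 1 < Nat.find (hexist i) from Nat.sub_lt hpos Nat.one_pos)
      push_neg at hmin
      have : (V.filter fun v => v i < a i) = (V.filter fun v => v i ≤ a i - 1) := by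
        apply Finset.filter_congr
        intro v _
        constructor <;> intro h <;> omega
      rw [this]
      exact hmin
  have hb : ∀ i, t ≤ ((V.filter fun v => b i ≤ v i).card : ℝ) := by
    intro i
    refine Nat.findGreatest_spec (P := fun x => t ≤ ((V.filter fun v => x ≤ v i).card : ℝ))
      (m := 0) (Nat.zero_le _) ?_
    simp only [Finset.filter_true_of_mem (fun (v : Fin d → ℕ) (_ : v ∈ V) => Nat.zero_le (v i))]
    exact htn
  have hb' : ∀ i, ((V.filter fun v => b i + 1 ≤ v i).card : ℝ) < t := by
    intro i
    by_contra h
    push_neg at h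
    have hne : (V.filter fun v => b i + 1 ≤ v i).Nonempty := by
      rw [← Finset.card_pos]
      rcases Nat.eq_zero_or_pos (V.filter fun v => b i + 1 ≤ v i).card with h0 | h1
      · rw [h0] at h; norm_num at h; linarith
      · exact h1
    obtain ⟨v, hv⟩ := hne
    rw [Finset.mem_filter] at hv
    have hle : b i + 1 ≤ B i := le_trans hv.2 (hBle i v hv.1)
    exact Nat.findGreatest_is_greatest (P := fun x => t ≤ ((V.filter fun v => x ≤ v i).card : ℝ))
      (Nat.lt_succ_self _) hle h
  -- the box
  set box : Finset (Fin d → ℕ) := V.filter fun v => ∀ i, a i ≤ v i ∧ v i ≤ b i with hbox_def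
  have hsubbox : V ⊆ box ∪ Finset.univ.biUnion (fun i =>
      (V.filter fun v => v i < a i) ∪ (V.filter fun v => b i + 1 ≤ v i)) := by
    intro v hv
    by_cases h : ∀ i, a i ≤ v i ∧ v i ≤ b i
    · exact Finset.mem_union_left _ (Finset.mem_filter.2 ⟨hv, h⟩)
    · push_neg at h
      obtain ⟨i, hi⟩ := h
      refine Finset.mem_union_right _ (Finset.mem_biUnion.2 ⟨i, Finset.mem_univ _, ?_⟩)
      rcases lt_or_ge (v i) (a i) with h1 | h1
      · exact Finset.mem_union_left _ (Finset.mem_filter.2 ⟨hv, h1⟩)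
      · exact Finset.mem_union_right _ (Finset.mem_filter.2 ⟨hv, by omega⟩)
  have hboxcard : (n:ℝ) / ((d:ℝ)+1) ≤ (box.card : ℝ) := by
    have h1 : n ≤ box.card + ∑ i : Fin d,
        ((V.filter fun v => v i < a i).card + (V.filter fun v => b i + 1 ≤ v i).card) := by
      calc n ≤ (box ∪ Finset.univ.biUnion (fun i =>
          (V.filter fun v => v i < a i) ∪ (V.filter fun v => b i + 1 ≤ v i))).card :=
            Finset.card_le_card hsubbox
        _ ≤ box.card + (Finset.univ.biUnion (fun i =>
          (V.filter fun v => v i < a i) ∪ (V.filter fun v => b i + 1 ≤ v i))).card :=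
            Finset.card_union_le _ _
        _ ≤ box.card + ∑ i : Fin d,
            ((V.filter fun v => v i < a i) ∪ (V.filter fun v => b i + 1 ≤ v i)).card := by
            exact Nat.add_le_add_left Finset.card_biUnion_le _
        _ ≤ _ := by
            gcongr with i
            exact Finset.card_union_le _ _
    have h2 : (n:ℝ) ≤ (box.card : ℝ) + ∑ i : Fin d,
        (((V.filter fun v => v i < a i).card : ℝ) + ((V.filter fun v => b i + 1 ≤ v i).card : ℝ)) := by
      exact_mod_cast h1
    have h3 : ∑ i : Fin d,
        (((V.filter fun v => v i < a i).card : ℝ) + ((V.filter fun v => b i + 1 ≤ v i).card : ℝ))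
        ≤ (d:ℝ) * (2 * t) := by
      calc _ ≤ ∑ _i : Fin d, (2*t) := by
            apply Finset.sum_le_sum
            intro i _
            have := ha' i; have := hb' i; linarith
        _ = (d:ℝ) * (2*t) := by
            rw [Finset.sum_const, Finset.card_univ, Fintype.card_fin, nsmul_eq_mul]
    have h4 : (n:ℝ) - (d:ℝ) * (2*t) ≤ (box.card:ℝ) := by linarith
    have h5 : (n:ℝ)/((d:ℝ)+1) ≤ (n:ℝ) - (d:ℝ)*(2*t) := by
      rw [htdef]
      rw [div_le_iff₀ (by positivity)]
      have h6 : (d:ℝ)*(2*((n:ℝ)/(4*((d:ℝ)+1)))) = (d:ℝ)*(n:ℝ)/(2*((d:ℝ)+1)) := by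
        field_simp; ring
      rw [h6]
      have h8 : ((n:ℝ) - (d:ℝ)*(n:ℝ)/(2*((d:ℝ)+1))) * ((d:ℝ)+1)
          = (n:ℝ)*((d:ℝ)+1) - (d:ℝ)*(n:ℝ)/2 := by field_simp
      rw [h8]; nlinarith
    linarith
  -- box card vs product
  have hprod : (box.card : ℝ) ≤ ∏ i : Fin d, ((b i + 1 - a i : ℕ) : ℝ) := by
    have hsub : box ⊆ Fintype.piFinset (fun i => Finset.Icc (a i) (b i)) := by
      intro v hv
      rw [Fintype.mem_piFinset]
      intro i
      rw [Finset.mem_Icc]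
      exact (Finset.mem_filter.1 hv).2 i
    have := Finset.card_le_card hsub
    rw [Fintype.card_piFinset] at this
    simp only [Nat.card_Icc] at this
    exact_mod_cast this
  -- pick max dimension
  obtain ⟨i0, -, hmax⟩ := Finset.exists_max_image Finset.univ (fun i => b i + 1 - a i)
    ⟨⟨0, hdn⟩, Finset.mem_univ _⟩
  set W : ℕ := b i0 + 1 - a i0 with hW
  have hprodW : (box.card : ℝ) ≤ ((W:ℝ)) ^ d := by
    have h9 : ∏ i : Fin d, (b i + 1 - a i) ≤ W ^ d := by
      have := Finset.prod_le_pow_card Finset.univ (fun i => b i + 1 - a i) W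
        (fun i _ => hmax i (Finset.mem_univ i))
      simpa using this
    calc (box.card : ℝ) ≤ ∏ i : Fin d, ((b i + 1 - a i : ℕ) : ℝ) := hprod
      _ = ((∏ i : Fin d, (b i + 1 - a i) : ℕ) : ℝ) := by push_cast; rfl
      _ ≤ ((W ^ d : ℕ) : ℝ) := by exact_mod_cast h9
      _ = (W:ℝ)^d := by push_cast; rfl
  have hwd : w ^ d = (n:ℝ)/((d:ℝ)+1) :=
    rpow_one_div_pow_self _ (by positivity) d (by omega)
  have hwW : w ≤ (W:ℝ) := by
    apply le_of_pow_le_pow_left₀ (n := d) (by omega) (by positivity)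
    rw [hwd]
    exact le_trans hboxcard hprodW
  -- basic facts about W
  have hWc : 24 * c ≤ W := by exact_mod_cast le_trans hw24 hwW
  have hab : a i0 ≤ b i0 := by omega
  have hWeq : (b i0 : ℤ) + 1 - (a i0 : ℤ) = (W : ℤ) := by omega
  -- the range of candidate dividers
  set X : Finset ℤ := Finset.Icc ((a i0 : ℤ) + 1) ((b i0 : ℤ) - c) with hXdef
  have hXcard : (X.card : ℤ) = (W : ℤ) - 1 - c := by
    rw [hXdef, Int.card_Icc]
    omega
  have hXR : w / 2 ≤ (X.card : ℝ) := by
    have h1 : ((X.card : ℤ) : ℝ) = (W : ℝ) - 1 - (c : ℝ) := by rw [hXcard]; push_cast; ring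
    push_cast at h1
    rw [h1]
    linarith
  have hXne : X.Nonempty := by
    rw [← Finset.card_pos]
    rcases Nat.eq_zero_or_pos X.card with h0 | h1
    · exfalso
      rw [h0] at hXR
      norm_num at hXR
      linarith
    · exact h1
  -- the double counting bound
  have hsum : ∑ x ∈ X, (V.filter fun v => x ≤ (v i0:ℤ) ∧ (v i0:ℤ) ≤ x + (c:ℤ) - 1).card
      ≤ n * c := divider_sum_bound d c i0 V X
  -- pick the best divider
  obtain ⟨x, hxX, hxmin⟩ := Finset.exists_min_image X
    (fun x => (V.filter fun v => x ≤ (v i0:ℤ) ∧ (v i0:ℤ) ≤ x + (c:ℤ) - 1).card) hXne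
  rw [hXdef, Finset.mem_Icc] at hxX
  set Sc : ℕ := (V.filter fun v => x ≤ (v i0:ℤ) ∧ (v i0:ℤ) ≤ x + (c:ℤ) - 1).card with hScdef
  have hScsum : X.card * Sc ≤ n * c := by
    calc X.card * Sc = X.card • Sc := by rw [smul_eq_mul]
      _ ≤ ∑ y ∈ X, (V.filter fun v => y ≤ (v i0:ℤ) ∧ (v i0:ℤ) ≤ y + (c:ℤ) - 1).card :=
          Finset.card_nsmul_le_sum _ _ _ (fun y hy => hxmin y hy)
      _ ≤ n * c := hsum
  have hScR : (Sc : ℝ) * w ≤ 2 * (c:ℝ) * (n:ℝ) := by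
    have h1 : (Sc : ℝ) * (w/2) ≤ (Sc : ℝ) * (X.card : ℝ) := by
      apply mul_le_mul_of_nonneg_left hXR (by positivity)
    have h2 : ((X.card : ℕ) : ℝ) * (Sc:ℝ) ≤ (n:ℝ) * c := by exact_mod_cast hScsum
    nlinarith
  -- the main equality for the right-hand side
  have hrhs : 2 * (c : ℝ) * (1 + (d : ℝ)) ^ ((1 : ℝ) / (d : ℝ)) *
      (n : ℝ) ^ (1 - (1 : ℝ) / (d : ℝ)) = 2 * (c:ℝ) * (n:ℝ) / w := by
    rw [hwdef]
    exact rhs_eq c d n hdn hn0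
  refine ⟨i0, x, ?_, ?_, ?_⟩
  · -- left part
    have hsub : V.filter (fun v => v i0 ≤ a i0) ⊆ V.filter (fun v => (v i0:ℤ) ≤ x - 1) := by
      intro v hv
      rw [Finset.mem_filter] at hv ⊢
      refine ⟨hv.1, ?_⟩
      have h1 : ((v i0 : ℕ) : ℤ) ≤ (a i0 : ℤ) := Int.ofNat_le.mpr hv.2
      exact le_trans h1 (Int.le_sub_one_iff.mpr (Int.lt_iff_add_one_le.mpr hxX.1))
    have := Finset.card_le_card hsub
    have hcast : ((V.filter (fun v => v i0 ≤ a i0)).card : ℝ)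
        ≤ ((V.filter (fun v => (v i0:ℤ) ≤ x - 1)).card : ℝ) := by exact_mod_cast this
    rw [ge_iff_le]
    calc (n:ℝ)/(4*((d:ℝ)+1)) = t := rfl
      _ ≤ _ := le_trans (ha i0) hcast
  · -- right part
    have hsub : V.filter (fun v => b i0 ≤ v i0) ⊆ V.filter (fun v => x + (c:ℤ) ≤ (v i0:ℤ)) := by
      intro v hv
      rw [Finset.mem_filter] at hv ⊢
      refine ⟨hv.1, ?_⟩
      have h1 : (b i0 : ℤ) ≤ ((v i0 : ℕ) : ℤ) := Int.ofNat_le.mpr hv.2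
      have h2 : x + (c:ℤ) ≤ (b i0 : ℤ) := by
        have h3 := add_le_add_left hxX.2 (c:ℤ)
        rwa [sub_add_cancel] at h3
      exact le_trans h2 h1
    have := Finset.card_le_card hsub
    have hcast : ((V.filter (fun v => b i0 ≤ v i0)).card : ℝ)
        ≤ ((V.filter (fun v => x + (c:ℤ) ≤ (v i0:ℤ))).card : ℝ) := by exact_mod_cast this
    rw [ge_iff_le]
    calc (n:ℝ)/(4*((d:ℝ)+1)) = t := rfl
      _ ≤ _ := le_trans (hb i0) hcast
  · -- boundary part
    rw [hrhs]
    rw [le_div_iff₀ hwpos]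
    exact hScR
end

section
/- (Existence of a pseudo s-separator) For every integer d ≥ 2 there exists a constant K > 0 depending only on d with the following property. Let c ≥ 1 be an integer, s > 0 a real number, and V a finite set of points in ℕ^d with |V| > s and 8(d+1)·c ≤ (s/(d+1))^{1/d}. Then there exist a subset S ⊆ V and a partition of V ∖ S into nonempty parts V_1, …, V_h such that: (i) s/(4(d+1)) < |V_i| ≤ s for every i ∈ {1,…,h}; (ii) h ≤ 4(d+1)·|V|/s; (iii) for all i ≠ j and all u ∈ V_i, v ∈ V_j, ‖u − v‖_∞ > c; and (iv) |S| ≤ K·c·|V|·s^{−1/d}·(1 + log(|V|/s)). -/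
open Finset

namespace PseudoSep

variable {α : Type*} [DecidableEq α]

def lunion (ls : List (Finset α)) : Finset α := ls.foldr (· ∪ ·) ∅

@[simp] lemma lunion_nil : lunion ([] : List (Finset α)) = ∅ := rfl

@[simp] lemma lunion_cons (x : Finset α) (xs : List (Finset α)) :
    lunion (x :: xs) = x ∪ lunion xs := rfl

lemma mem_lunion {a : α} {ls : List (Finset α)} :
    a ∈ lunion ls ↔ ∃ x ∈ ls, a ∈ x := by
  induction ls with
  | nil => simp
  | cons x xs ih => simp [ih]

lemma subset_lunion {x : Finset α} {ls : List (Finset α)} (hx : x ∈ ls) :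
    x ⊆ lunion ls := fun a ha => mem_lunion.2 ⟨x, hx, ha⟩

lemma disjoint_lunion {g : Finset α} {ls : List (Finset α)}
    (h : ∀ x ∈ ls, Disjoint g x) : Disjoint g (lunion ls) := by
  rw [Finset.disjoint_right]
  intro a ha hag
  obtain ⟨x, hx, hax⟩ := mem_lunion.1 ha
  exact (Finset.disjoint_right.1 (h x hx)) hax hag

lemma card_lunion_le (ls : List (Finset α)) :
    (lunion ls).card ≤ (ls.map Finset.card).sum := by
  induction ls with
  | nil => simp
  | cons x xs ih =>
    simp only [lunion_cons, List.map_cons, List.sum_cons]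
    exact le_trans (Finset.card_union_le _ _) (by omega)

lemma card_lunion_eq (ls : List (Finset α)) (h : ls.Pairwise Disjoint) :
    (lunion ls).card = (ls.map Finset.card).sum := by
  induction ls with
  | nil => simp
  | cons x xs ih =>
    rw [List.pairwise_cons] at h
    simp only [lunion_cons, List.map_cons, List.sum_cons]
    rw [Finset.card_union_of_disjoint (disjoint_lunion h.1), ih h.2]

lemma sat_lunion (Sat : Finset α → Prop) (h0 : Sat ∅)
    (h2 : ∀ a b, Sat a → Sat b → Sat (a ∪ b)) :
    ∀ (ls : List (Finset α)), (∀ x ∈ ls, Sat x) → Sat (lunion ls) := by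
  intro ls
  induction ls with
  | nil => intro _; simpa using h0
  | cons x xs ih =>
    intro h
    exact h2 _ _ (h x (by simp)) (ih (fun y hy => h y (by simp [hy])))

lemma length_mul_le_sum (β : ℝ) (G : List (Finset α))
    (h : ∀ g ∈ G, β ≤ (g.card : ℝ)) :
    (G.length : ℝ) * β ≤ ((G.map Finset.card).sum : ℝ) := by
  induction G with
  | nil => simp
  | cons x xs ih =>
    have h1 := h x (by simp)
    have h2 := ih (fun g hg => h g (by simp [hg]))
    simp only [List.length_cons, List.map_cons, List.sum_cons]
    push_cast
    push_cast at h2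
    linarith

/-- Greedy extraction of one group. -/
lemma extract (A : ℕ) (Sat : Finset α → Prop)
    (hS2 : ∀ a b, Sat a → Sat b → Sat (a ∪ b)) :
    ∀ (ls : List (Finset α)) (β : ℝ), 0 ≤ β →
      ls.Pairwise Disjoint → (∀ x ∈ ls, x.card ≤ A) → (∀ x ∈ ls, Sat x) →
      β < ((ls.map Finset.card).sum : ℝ) →
      ∃ (g : Finset α) (rest : List (Finset α)),
        rest.Sublist ls ∧ rest.length < ls.length ∧
        g ∪ lunion rest = lunion ls ∧ Disjoint g (lunion rest) ∧
        Sat g ∧ β < (g.card : ℝ) ∧ (g.card : ℝ) ≤ β + A := by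
  intro ls
  induction ls with
  | nil => intro β hβ _ _ _ hlt; simp at hlt; linarith
  | cons x xs ih =>
    intro β hβ hpw hcard hsat hlt
    rw [List.pairwise_cons] at hpw
    by_cases hx : β < (x.card : ℝ)
    · refine ⟨x, xs, List.sublist_cons_self x xs, by simp, rfl, ?_, hsat x (by simp), hx, ?_⟩
      · exact disjoint_lunion hpw.1
      · have := hcard x (by simp)
        have : (x.card : ℝ) ≤ A := by exact_mod_cast this
        linarith
    · push_neg at hx
      have hsum : β - (x.card : ℝ) < (((xs).map Finset.card).sum : ℝ) := by
        simp only [List.map_cons, List.sum_cons] at hlt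
        push_cast at hlt ⊢
        linarith
      obtain ⟨g', rest, hsub, hlen, hun, hdisj, hsatg, hlow, hhigh⟩ :=
        ih (β - (x.card : ℝ)) (by linarith) hpw.2 (fun y hy => hcard y (by simp [hy]))
          (fun y hy => hsat y (by simp [hy])) hsum
      have hg'sub : g' ⊆ lunion xs := by
        rw [← hun]; exact Finset.subset_union_left
      have hxg' : Disjoint x g' :=
        (disjoint_lunion hpw.1).mono_right hg'sub
      have hrest_sub : lunion rest ⊆ lunion xs := by
        intro a ha
        obtain ⟨y, hy, hay⟩ := mem_lunion.1 ha
        exact mem_lunion.2 ⟨y, hsub.mem hy, hay⟩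
      refine ⟨x ∪ g', rest, hsub.cons x, by simpa using Nat.lt_succ_of_lt hlen, ?_, ?_, ?_, ?_, ?_⟩
      · rw [Finset.union_assoc, hun]; rfl
      · exact Finset.disjoint_union_left.2
          ⟨(disjoint_lunion hpw.1).mono_right hrest_sub, hdisj⟩
      · exact hS2 _ _ (hsat x (by simp)) hsatg
      · rw [Finset.card_union_of_disjoint hxg']
        push_cast
        linarith
      · rw [Finset.card_union_of_disjoint hxg']
        push_cast
        linarith

/-- Greedy grouping of disjoint small sets into medium-size groups. -/
lemma grouping (A : ℕ) (Sat : Finset α → Prop) (hS0 : Sat ∅)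
    (hS2 : ∀ a b, Sat a → Sat b → Sat (a ∪ b)) (β : ℝ) (hβ : 0 ≤ β) :
    ∀ (n : ℕ) (ls : List (Finset α)), ls.length ≤ n →
      ls.Pairwise Disjoint → (∀ x ∈ ls, x.card ≤ A) → (∀ x ∈ ls, Sat x) →
      β < ((ls.map Finset.card).sum : ℝ) →
      ∃ G : List (Finset α), G.Pairwise Disjoint ∧ lunion G = lunion ls ∧
        ∀ g ∈ G, Sat g ∧ β < (g.card : ℝ) ∧ (g.card : ℝ) ≤ 2 * β + A := by
  intro n
  induction n with
  | zero =>
    intro ls hlen _ _ _ hlt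
    rw [Nat.le_zero, List.length_eq_zero_iff] at hlen
    subst hlen; simp at hlt; linarith
  | succ n ih =>
    intro ls hlen hpw hcard hsat hlt
    obtain ⟨g, rest, hsub, hrlen, hun, hdisj, hsatg, hlow, hhigh⟩ :=
      extract A Sat hS2 ls β hβ hpw hcard hsat hlt
    by_cases hr : β < (((rest).map Finset.card).sum : ℝ)
    · obtain ⟨G', hG'pw, hG'un, hG'p⟩ :=
        ih rest (by omega) (hpw.sublist hsub)
          (fun y hy => hcard y (hsub.mem hy)) (fun y hy => hsat y (hsub.mem hy)) hr
      refine ⟨g :: G', ?_, ?_, ?_⟩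
      · rw [List.pairwise_cons]
        refine ⟨fun g'' hg'' => ?_, hG'pw⟩
        have : g'' ⊆ lunion rest := hG'un ▸ subset_lunion hg''
        exact hdisj.mono_right this
      · rw [lunion_cons, hG'un, hun]
      · intro g'' hg''
        rcases List.mem_cons.1 hg'' with h | h
        · subst h; exact ⟨hsatg, hlow, by linarith⟩
        · exact hG'p g'' h
    · push_neg at hr
      have hRcard : ((lunion rest).card : ℝ) ≤ β := by
        have := card_lunion_le rest
        have : ((lunion rest).card : ℝ) ≤ (((rest).map Finset.card).sum : ℝ) := by
          exact_mod_cast this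
        linarith
      refine ⟨[g ∪ lunion rest], List.pairwise_singleton _ _, ?_, ?_⟩
      · rw [← hun]; simp [lunion]
      · intro g'' hg''
        simp only [List.mem_singleton] at hg''
        subst hg''
        have hc : (g ∪ lunion rest).card = g.card + (lunion rest).card :=
          Finset.card_union_of_disjoint hdisj
        refine ⟨hS2 _ _ hsatg (sat_lunion Sat hS0 hS2 rest
          (fun y hy => hsat y (hsub.mem hy))), ?_, ?_⟩
        · rw [hc]; push_cast; linarith [Nat.cast_nonneg (α := ℝ) (lunion rest).card]
        · rw [hc]; push_cast; linarith

/-- Number of shifts `t < L` putting `a + t` in the top-`c` residue window is at most `c`. -/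
lemma count_bad_shifts (L c a : ℕ) (hL : 0 < L) :
    ((Finset.range L).filter (fun t => L - c ≤ (a + t) % L)).card ≤ c := by
  have h1 : ((Finset.range L).filter (fun t => L - c ≤ (a + t) % L)).card ≤
      (Finset.Ico (L - c) L).card := by
    apply Finset.card_le_card_of_injOn (fun t => (a + t) % L)
    · intro t ht
      rw [Finset.mem_coe, Finset.mem_filter] at ht
      rw [Finset.mem_coe]
      exact Finset.mem_Ico.2 ⟨ht.2, Nat.mod_lt _ hL⟩
    · intro t1 h1 t2 h2 heq
      simp only [Finset.coe_filter, Set.mem_setOf_eq, Finset.mem_range] at h1 h2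
      have : t1 ≡ t2 [MOD L] := Nat.ModEq.add_left_cancel' a heq
      rw [Nat.ModEq, Nat.mod_eq_of_lt h1.1, Nat.mod_eq_of_lt h2.1] at this
      exact this
  rw [Nat.card_Ico] at h1
  omega

/-- Integer distance from being in different cells and outside the boundary slab. -/
lemma dist_of_diff_cell (L c t : ℕ) (x y : ℕ)
    (hx : (x + t) % L < L - c) (hab : (x + t) / L < (y + t) / L) :
    (c : ℤ) < (y : ℤ) - (x : ℤ) := by
  have e1 : L * ((x + t) / L) + (x + t) % L = x + t := Nat.div_add_mod _ _
  have e2 : L * ((y + t) / L) + (y + t) % L = y + t := Nat.div_add_mod _ _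
  have h3 : L * ((x + t) / L) + L ≤ L * ((y + t) / L) := by
    have h4 : (x + t) / L + 1 ≤ (y + t) / L := hab
    calc L * ((x + t) / L) + L = L * ((x + t) / L + 1) := by ring
    _ ≤ L * ((y + t) / L) := Nat.mul_le_mul_left L h4
  generalize hA : L * ((x + t) / L) = A at e1 h3
  generalize hB : L * ((y + t) / L) = B at e2 h3
  omega

end PseudoSep

namespace PseudoSep

lemma class_card_le (d L t : ℕ) (hL : 0 < L) (W : Finset (Fin d → ℕ)) (z : Fin d → ℕ) :
    (W.filter (fun u => (fun k => (u k + t) / L) = z)).card ≤ L ^ d := by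
  classical
  have h := Finset.card_le_card_of_injOn
    (f := fun (u : Fin d → ℕ) (k : Fin d) => (u k + t) % L)
    (s := W.filter (fun u => (fun k => (u k + t) / L) = z))
    (t := Fintype.piFinset (fun _ : Fin d => Finset.range L))
    (fun u _ => Fintype.mem_piFinset.2 (fun k => Finset.mem_range.2 (Nat.mod_lt _ hL)))
    ?_
  · rw [Fintype.card_piFinset] at h
    simpa using h
  · intro u hu v hv heq
    simp only [Finset.coe_filter, Set.mem_setOf_eq] at hu hv
    funext k
    have h1 : (u k + t) / L = (v k + t) / L := by
      rw [congrFun hu.2 k, congrFun hv.2 k]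
    have h2 : (u k + t) % L = (v k + t) % L := congrFun heq k
    have e1 := Nat.div_add_mod (u k + t) L
    have e2 := Nat.div_add_mod (v k + t) L
    have : u k + t = v k + t := by rw [← e1, ← e2, h1, h2]
    omega

lemma exists_good_shift (d L c : ℕ) (hL : 0 < L) (V : Finset (Fin d → ℕ)) :
    ∃ t ∈ Finset.range L,
      L * (V.filter (fun u => ∃ j : Fin d, L - c ≤ (u j + t) % L)).card
        ≤ d * (V.card * c) := by
  classical
  have hstep : ∀ t, (V.filter (fun u => ∃ j : Fin d, L - c ≤ (u j + t) % L)).card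
      ≤ ∑ j : Fin d, (V.filter (fun u => L - c ≤ (u j + t) % L)).card := by
    intro t
    calc (V.filter (fun u => ∃ j : Fin d, L - c ≤ (u j + t) % L)).card
        ≤ (Finset.univ.biUnion
            (fun j : Fin d => V.filter (fun u => L - c ≤ (u j + t) % L))).card := by
          apply Finset.card_le_card
          intro u hu
          rw [Finset.mem_filter] at hu
          obtain ⟨j, hj⟩ := hu.2
          exact Finset.mem_biUnion.2 ⟨j, Finset.mem_univ _, Finset.mem_filter.2 ⟨hu.1, hj⟩⟩
      _ ≤ ∑ j : Fin d, (V.filter (fun u => L - c ≤ (u j + t) % L)).card :=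
          Finset.card_biUnion_le
  have hswap : ∀ j : Fin d,
      ∑ t ∈ Finset.range L, (V.filter (fun u => L - c ≤ (u j + t) % L)).card
        ≤ V.card * c := by
    intro j
    have heq : ∑ t ∈ Finset.range L, (V.filter (fun u => L - c ≤ (u j + t) % L)).card
        = ∑ u ∈ V, ((Finset.range L).filter (fun t => L - c ≤ (u j + t) % L)).card := by
      simp_rw [Finset.card_filter]
      rw [Finset.sum_comm]
    rw [heq]
    calc ∑ u ∈ V, ((Finset.range L).filter (fun t => L - c ≤ (u j + t) % L)).card
        ≤ ∑ _u ∈ V, c := Finset.sum_le_sum (fun u _ => count_bad_shifts L c (u j) hL)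
      _ = V.card * c := by rw [Finset.sum_const, smul_eq_mul]
  have htot : ∑ t ∈ Finset.range L,
      (V.filter (fun u => ∃ j : Fin d, L - c ≤ (u j + t) % L)).card ≤ d * (V.card * c) := by
    calc ∑ t ∈ Finset.range L,
        (V.filter (fun u => ∃ j : Fin d, L - c ≤ (u j + t) % L)).card
        ≤ ∑ t ∈ Finset.range L, ∑ j : Fin d,
            (V.filter (fun u => L - c ≤ (u j + t) % L)).card :=
          Finset.sum_le_sum (fun t _ => hstep t)
      _ = ∑ j : Fin d, ∑ t ∈ Finset.range L,
            (V.filter (fun u => L - c ≤ (u j + t) % L)).card := Finset.sum_comm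
      _ ≤ ∑ _j : Fin d, V.card * c := Finset.sum_le_sum (fun j _ => hswap j)
      _ = d * (V.card * c) := by
          rw [Finset.sum_const, Finset.card_univ, Fintype.card_fin, smul_eq_mul]
  apply Finset.exists_le_of_sum_le (Finset.nonempty_range_iff.2 hL.ne')
  rw [← Finset.mul_sum, Finset.sum_const, Finset.card_range, smul_eq_mul]
  exact Nat.mul_le_mul_left L htot

end PseudoSep

namespace PseudoSep

lemma rpow_split (d : ℕ) (s : ℝ) (hs : 0 < s) (hd0 : (0:ℝ) < (d:ℝ)) (hd1 : (1:ℝ) ≤ (d:ℝ)) :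
    s ^ ((1:ℝ)/(d:ℝ)) ≤ ((d:ℝ)+1) * (s / ((d:ℝ)+1)) ^ ((1:ℝ)/(d:ℝ)) := by
  have hdpos : (0:ℝ) < (d:ℝ) + 1 := by linarith
  have hsd : 0 ≤ s / ((d:ℝ)+1) := by positivity
  have e : ((d : ℝ) + 1) * (s / ((d : ℝ) + 1)) = s := by field_simp
  calc s ^ ((1:ℝ)/(d:ℝ))
      = (((d : ℝ) + 1) * (s / ((d : ℝ) + 1))) ^ ((1 : ℝ) / (d : ℝ)) := by rw [e]
    _ = ((d : ℝ) + 1) ^ ((1 : ℝ) / (d : ℝ)) * (s / ((d:ℝ)+1)) ^ ((1:ℝ)/(d:ℝ)) :=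
        Real.mul_rpow (by linarith) hsd
    _ ≤ ((d : ℝ) + 1) * (s / ((d:ℝ)+1)) ^ ((1:ℝ)/(d:ℝ)) := by
        apply mul_le_mul_of_nonneg_right _ (Real.rpow_nonneg hsd _)
        calc ((d : ℝ) + 1) ^ ((1 : ℝ) / (d : ℝ))
            ≤ ((d : ℝ) + 1) ^ (1 : ℝ) :=
              Real.rpow_le_rpow_of_exponent_le (by linarith)
                (by rw [div_le_one hd0]; linarith)
          _ = (d : ℝ) + 1 := Real.rpow_one _

lemma size_bound (d c L : ℕ) (s Vc Sc P : ℝ)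
    (hD : (2:ℝ) ≤ (d:ℝ)) (hs : 0 < s) (hsV : s ≤ Vc) (hc1 : (1:ℝ) ≤ (c:ℝ))
    (hL : (0:ℝ) < (L:ℝ)) (hPpos : 0 < P)
    (hQP : s ^ ((1:ℝ)/(d:ℝ)) ≤ ((d:ℝ)+1) * P)
    (hPL : P ≤ 2 * (L:ℝ))
    (hSc : Sc ≤ (d:ℝ) * c * Vc / (L:ℝ)) (hVc0 : 0 ≤ Vc) :
    Sc ≤ 2 * (d:ℝ) * ((d:ℝ)+1) * (c:ℝ) * Vc * s ^ (-(1:ℝ)/(d:ℝ)) *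
      (1 + Real.log (Vc / s)) := by
  set Q : ℝ := s ^ ((1:ℝ)/(d:ℝ)) with hQdef
  have hQpos : 0 < Q := Real.rpow_pos_of_pos hs _
  have hneg : s ^ (-(1 : ℝ) / (d : ℝ)) = Q⁻¹ := by
    rw [hQdef, neg_div, Real.rpow_neg hs.le]
  have hQL : Q ≤ 2 * ((d : ℝ) + 1) * (L : ℝ) := by nlinarith
  have hlog : 0 ≤ Real.log (Vc / s) :=
    Real.log_nonneg (by rw [le_div_iff₀ hs]; linarith)
  have hc0 : (0 : ℝ) ≤ (c : ℝ) := by linarith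
  have hKL : (d : ℝ) * Q ≤ (2 * (d : ℝ) * ((d : ℝ) + 1)) * (L : ℝ) := by nlinarith
  have hstep2 : (d : ℝ) * c * Vc / (L : ℝ)
      ≤ 2 * (d : ℝ) * ((d : ℝ) + 1) * c * Vc * Q⁻¹ := by
    rw [← div_eq_mul_inv, div_le_div_iff₀ hL hQpos]
    nlinarith [mul_le_mul_of_nonneg_left hKL
      (show (0 : ℝ) ≤ (c : ℝ) * Vc by positivity)]
  have hX : (0:ℝ) ≤ 2 * (d : ℝ) * ((d : ℝ) + 1) * c * Vc * Q⁻¹ := by positivity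
  rw [hneg]
  calc Sc ≤ (d : ℝ) * c * Vc / (L : ℝ) := hSc
    _ ≤ 2 * (d : ℝ) * ((d : ℝ) + 1) * c * Vc * Q⁻¹ := hstep2
    _ ≤ 2 * (d : ℝ) * ((d : ℝ) + 1) * c * Vc * Q⁻¹ * (1 + Real.log (Vc / s)) :=
        le_mul_of_one_le_right hX (by linarith)

end PseudoSep
set_option maxHeartbeats 2000000 in
/-- **Existence of a pseudo s-separator.** For every `d ≥ 2` there is a
constant `K > 0` depending only on `d` such that: for every integer `c ≥ 1`, real `s > 0`
and finite `V ⊂ ℕ^d` with `|V| > s` and `8(d+1)·c ≤ (s/(d+1))^{1/d}`, there exist `S ⊆ V`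
and a partition of `V \ S` into parts `V_1, …, V_h` with
(i) `s/(4(d+1)) < |V_i| ≤ s`, (ii) `h ≤ 4(d+1)·|V|/s`,
(iii) points in distinct parts are at `ℓ∞`-distance `> c`, and
(iv) `|S| ≤ K·c·|V|·s^{-1/d}·(1 + log(|V|/s))`. -/
theorem pseudo_s_separator_exists (d : ℕ) (hd : 2 ≤ d) :
    ∃ K : ℝ, 0 < K ∧
      ∀ (c : ℕ) (s : ℝ) (V : Finset (Fin d → ℕ)),
        1 ≤ c → 0 < s → s < (V.card : ℝ) →
        8 * ((d : ℝ) + 1) * (c : ℝ) ≤ (s / ((d : ℝ) + 1)) ^ ((1 : ℝ) / (d : ℝ)) →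
        ∃ (S : Finset (Fin d → ℕ)) (h : ℕ) (Vp : Fin h → Finset (Fin d → ℕ)),
          S ⊆ V ∧
          (∀ i j : Fin h, i ≠ j → Disjoint (Vp i) (Vp j)) ∧
          (Finset.univ.biUnion Vp = V \ S) ∧
          (∀ i : Fin h,
            s / (4 * ((d : ℝ) + 1)) < ((Vp i).card : ℝ) ∧ ((Vp i).card : ℝ) ≤ s) ∧
          ((h : ℝ) ≤ 4 * ((d : ℝ) + 1) * (V.card : ℝ) / s) ∧
          (∀ i j : Fin h, i ≠ j → ∀ u ∈ Vp i, ∀ v ∈ Vp j,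
            ∃ k : Fin d, (c : ℤ) < |(u k : ℤ) - (v k : ℤ)|) ∧
          ((S.card : ℝ) ≤ K * (c : ℝ) * (V.card : ℝ) * s ^ (-(1 : ℝ) / (d : ℝ)) *
            (1 + Real.log ((V.card : ℝ) / s))) := by
  classical
  have hD : (2 : ℝ) ≤ (d : ℝ) := by exact_mod_cast hd
  refine ⟨2 * (d : ℝ) * ((d : ℝ) + 1), by nlinarith, ?_⟩
  intro c s V hc hs hsV hP
  have hc1 : (1 : ℝ) ≤ (c : ℝ) := by exact_mod_cast hc
  have hdpos : (0 : ℝ) < (d : ℝ) + 1 := by linarith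
  have hsd : 0 < s / ((d : ℝ) + 1) := div_pos hs hdpos
  set P : ℝ := (s / ((d : ℝ) + 1)) ^ ((1 : ℝ) / (d : ℝ)) with hPdef
  have hPpos : 0 < P := Real.rpow_pos_of_pos hsd _
  have hP24 : 24 ≤ P := le_trans (by nlinarith) hP
  set L : ℕ := ⌊P⌋₊ with hLdef
  have hLP : (L : ℝ) ≤ P := Nat.floor_le hPpos.le
  have hPL1 : P < (L : ℝ) + 1 := Nat.lt_floor_add_one P
  have hLhalf : P / 2 ≤ (L : ℝ) := by linarith
  have hLc : 4 * ((d : ℝ) + 1) * (c : ℝ) ≤ (L : ℝ) := by linarith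
  have hcL : c < L := by
    have : (c : ℝ) < (L : ℝ) := by nlinarith
    exact_mod_cast this
  have hL0 : 0 < L := lt_of_le_of_lt (Nat.zero_le c) hcL
  have hLR0 : (0 : ℝ) < (L : ℝ) := by exact_mod_cast hL0
  have hd0 : (d : ℝ) ≠ 0 := by linarith
  have hPd : P ^ d = s / ((d : ℝ) + 1) := by
    rw [hPdef, ← Real.rpow_natCast ((s / ((d : ℝ) + 1)) ^ ((1 : ℝ) / (d : ℝ))) d,
      ← Real.rpow_mul hsd.le, one_div, inv_mul_cancel₀ hd0, Real.rpow_one]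
  have hLd : ((L ^ d : ℕ) : ℝ) ≤ s / ((d : ℝ) + 1) := by
    push_cast
    calc (L : ℝ) ^ d ≤ P ^ d := pow_le_pow_left₀ (Nat.cast_nonneg L) hLP d
      _ = s / ((d : ℝ) + 1) := hPd
  -- choose a good shift t
  obtain ⟨t, _ht, hbad⟩ := PseudoSep.exists_good_shift d L c hL0 V
  set S : Finset (Fin d → ℕ) :=
    V.filter (fun u => ∃ j : Fin d, L - c ≤ (u j + t) % L) with hSdef
  have hSsub : S ⊆ V := Finset.filter_subset _ _
  have hScard : (S.card : ℝ) ≤ (d : ℝ) * c * V.card / (L : ℝ) := by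
    rw [le_div_iff₀ hLR0]
    have h1 : ((L * S.card : ℕ) : ℝ) ≤ ((d * (V.card * c) : ℕ) : ℝ) := by exact_mod_cast hbad
    push_cast at h1
    nlinarith [h1]
  set W : Finset (Fin d → ℕ) := V \ S with hWdef
  have hSV : S.card ≤ V.card := Finset.card_le_card hSsub
  have hWr : (W.card : ℝ) = (V.card : ℝ) - (S.card : ℝ) := by
    rw [hWdef, Finset.card_sdiff_of_subset hSsub]
    push_cast [hSV]
    ring
  have hVc0 : (0 : ℝ) ≤ (V.card : ℝ) := Nat.cast_nonneg _
  have hSquarter : (S.card : ℝ) ≤ (V.card : ℝ) / 4 := by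
    have h4dc : 4 * (d : ℝ) * (c : ℝ) ≤ (L : ℝ) := by nlinarith
    have h2 := mul_le_mul_of_nonneg_left h4dc hVc0
    have h3 : (d : ℝ) * c * V.card / (L : ℝ) ≤ (V.card : ℝ) / 4 := by
      rw [div_le_div_iff₀ hLR0 (by norm_num : (0 : ℝ) < 4)]
      nlinarith [h2]
    linarith
  set β : ℝ := s / (4 * ((d : ℝ) + 1)) with hβdef
  have hβ0 : 0 < β := by rw [hβdef]; positivity
  have hβ12 : β ≤ s / 12 := by
    rw [hβdef, div_le_div_iff₀ (by linarith : (0 : ℝ) < 4 * ((d : ℝ) + 1)) (by norm_num : (0 : ℝ) < 12)]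
    nlinarith
  have hβW : β < (W.card : ℝ) := by
    rw [hWr]; linarith
  have h2βA : 2 * β + ((L ^ d : ℕ) : ℝ) ≤ s := by
    have e1 : s / ((d : ℝ) + 1) ≤ s / 3 := by
      rw [div_le_div_iff₀ hdpos (by norm_num : (0 : ℝ) < 3)]
      nlinarith
    linarith
  set key : (Fin d → ℕ) → (Fin d → ℕ) := fun u k => (u k + t) / L with hkeydef
  set Sat : Finset (Fin d → ℕ) → Prop :=
    fun g => ∀ u ∈ g, ∀ v ∈ W, key v = key u → v ∈ g with hSatdef
  have hS0 : Sat ∅ := by intro u hu; simp at hu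
  have hS2 : ∀ a b, Sat a → Sat b → Sat (a ∪ b) := by
    intro a b ha hb u hu v hv hk
    rcases Finset.mem_union.1 hu with h' | h'
    · exact Finset.mem_union.2 (Or.inl (ha u h' v hv hk))
    · exact Finset.mem_union.2 (Or.inr (hb u h' v hv hk))
  set classes : List (Finset (Fin d → ℕ)) :=
    (W.image key).toList.map (fun z => W.filter (fun u => key u = z)) with hclassesdef
  have hcl_pw : classes.Pairwise Disjoint := by
    apply List.Pairwise.map
    · intro z z' (hne : z ≠ z')
      refine Finset.disjoint_left.2 (fun u hu hu' => ?_)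
      rw [Finset.mem_filter] at hu hu'
      exact hne (hu.2 ▸ hu'.2 ▸ rfl)
    · exact Finset.nodup_toList (W.image key)
  have hcl_card : ∀ x ∈ classes, x.card ≤ L ^ d := by
    intro x hx
    obtain ⟨z, _hz, rfl⟩ := List.mem_map.1 hx
    exact PseudoSep.class_card_le d L t hL0 W z
  have hcl_sat : ∀ x ∈ classes, Sat x := by
    intro x hx
    obtain ⟨z, _hz, rfl⟩ := List.mem_map.1 hx
    intro u hu v hv hk
    rw [Finset.mem_filter] at hu ⊢
    exact ⟨hv, hk.trans hu.2⟩
  have hcl_un : PseudoSep.lunion classes = W := by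
    ext a
    rw [PseudoSep.mem_lunion]
    constructor
    · rintro ⟨x, hx, hax⟩
      obtain ⟨z, _hz, rfl⟩ := List.mem_map.1 hx
      exact (Finset.mem_filter.1 hax).1
    · intro ha
      refine ⟨W.filter (fun u => key u = key a), ?_, Finset.mem_filter.2 ⟨ha, rfl⟩⟩
      exact List.mem_map.2 ⟨key a, (Finset.mem_toList).2 (Finset.mem_image_of_mem key ha), rfl⟩
  have hcl_sum : (classes.map Finset.card).sum = W.card := by
    rw [← PseudoSep.card_lunion_eq classes hcl_pw, hcl_un]
  obtain ⟨G, hGpw, hGun, hGp⟩ :=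
    PseudoSep.grouping (L ^ d) Sat hS0 hS2 β hβ0.le classes.length classes le_rfl
      hcl_pw hcl_card hcl_sat (by rw [hcl_sum]; exact hβW)
  have hGW : PseudoSep.lunion G = W := hGun.trans hcl_un
  have hmemG : ∀ i : Fin G.length, G.get i ∈ G := fun i => List.get_mem G i
  have hdisj : ∀ i j : Fin G.length, i ≠ j → Disjoint (G.get i) (G.get j) := by
    intro i j hij
    have hpg := List.pairwise_iff_getElem.1 hGpw
    rcases lt_or_gt_of_ne (fun hh => hij (Fin.ext hh) : (i : ℕ) ≠ (j : ℕ)) with h' | h'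
    · simpa [List.get_eq_getElem] using hpg i.val j.val i.isLt j.isLt h'
    · simpa [List.get_eq_getElem] using (hpg j.val i.val j.isLt i.isLt h').symm
  have hgetW : ∀ (i : Fin G.length) (u : Fin d → ℕ), u ∈ G.get i → u ∈ W := by
    intro i u hu
    have : u ∈ PseudoSep.lunion G := PseudoSep.mem_lunion.2 ⟨G.get i, hmemG i, hu⟩
    rwa [hGW] at this
  refine ⟨S, G.length, fun i => G.get i, hSsub, hdisj, ?_, ?_, ?_, ?_, ?_⟩
  · -- biUnion = V \ S
    ext a
    simp only [Finset.mem_biUnion, Finset.mem_univ, true_and]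
    constructor
    · rintro ⟨i, hi⟩
      exact hgetW i a hi
    · intro ha
      have ha' : a ∈ PseudoSep.lunion G := by rw [hGW]; exact ha
      obtain ⟨g, hg, hag⟩ := PseudoSep.mem_lunion.1 ha'
      obtain ⟨i, hi⟩ := List.mem_iff_get.1 hg
      exact ⟨i, hi ▸ hag⟩
  · -- sizes
    intro i
    obtain ⟨_, hlow, hhigh⟩ := hGp (G.get i) (hmemG i)
    exact ⟨hlow, by linarith⟩
  · -- number of parts
    have hlen : (G.length : ℝ) * β ≤ ((G.map Finset.card).sum : ℝ) :=
      PseudoSep.length_mul_le_sum β G (fun g hg => (hGp g hg).2.1.le)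
    have hsumW : (G.map Finset.card).sum = W.card := by
      rw [← PseudoSep.card_lunion_eq G hGpw, hGW]
    have hWV : (W.card : ℝ) ≤ (V.card : ℝ) := by
      exact_mod_cast Finset.card_le_card (Finset.sdiff_subset : W ⊆ V)
    have hhβ : (G.length : ℝ) * β ≤ (V.card : ℝ) := by
      rw [hsumW] at hlen; linarith
    have hβs : β * (4 * ((d : ℝ) + 1)) = s := by
      rw [hβdef]; field_simp
    rw [le_div_iff₀ hs]
    calc (G.length : ℝ) * s = ((G.length : ℝ) * β) * (4 * ((d : ℝ) + 1)) := by
          rw [mul_assoc, hβs]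
      _ ≤ (V.card : ℝ) * (4 * ((d : ℝ) + 1)) :=
          mul_le_mul_of_nonneg_right hhβ (by linarith)
      _ = 4 * ((d : ℝ) + 1) * (V.card : ℝ) := by ring
  · -- separation
    intro i j hij u hu v hv
    have huW : u ∈ W := hgetW i u hu
    have hvW : v ∈ W := hgetW j v hv
    have hkne : key u ≠ key v := by
      intro hk
      have hsat := (hGp (G.get i) (hmemG i)).1
      have hvi : v ∈ G.get i := hsat u hu v hvW hk.symm
      exact absurd hv (Finset.disjoint_left.1 (hdisj i j hij) hvi)
    obtain ⟨k, hk⟩ := Function.ne_iff.1 hkne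
    have hmu : ∀ j' : Fin d, (u j' + t) % L < L - c := by
      intro j'
      by_contra hcon
      push_neg at hcon
      exact (Finset.mem_sdiff.1 huW).2
        (Finset.mem_filter.2 ⟨(Finset.mem_sdiff.1 huW).1, ⟨j', hcon⟩⟩)
    have hmv : ∀ j' : Fin d, (v j' + t) % L < L - c := by
      intro j'
      by_contra hcon
      push_neg at hcon
      exact (Finset.mem_sdiff.1 hvW).2
        (Finset.mem_filter.2 ⟨(Finset.mem_sdiff.1 hvW).1, ⟨j', hcon⟩⟩)
    have hkk : (u k + t) / L ≠ (v k + t) / L := hk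
    rcases lt_or_gt_of_ne hkk with h' | h'
    · refine ⟨k, ?_⟩
      have hlt := PseudoSep.dist_of_diff_cell L c t (u k) (v k) (hmu k) h'
      rw [abs_sub_comm]
      exact lt_of_lt_of_le hlt (le_abs_self _)
    · exact ⟨k, lt_of_lt_of_le (PseudoSep.dist_of_diff_cell L c t (v k) (u k) (hmv k) h')
        (le_abs_self _)⟩
  · -- size of S
    exact PseudoSep.size_bound d c L s (V.card : ℝ) (S.card : ℝ) P hD hs hsV.le hc1
      hLR0 hPpos (PseudoSep.rpow_split d s hs (by linarith) (by linarith))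
      (by linarith) hScard hVc0
end

section
/- Let d ≥ 2 and c ≥ 1 be integers, let V be a finite set of points in ℕ^d with 8(d+1)·c ≤ (|V|/(d+1))^{1/d}, let r > 0 be a real number, and let Ṽ ⊆ V be a nonempty (1/r)-approximation of V with respect to axis-parallel boxes. Then there exist a dimension i ∈ {1,…,d} and an integer x such that: |{ṽ ∈ Ṽ : ṽ_i ≤ x − 1}| ≥ |Ṽ|·(1/(4(d+1)) − 1/r), |{ṽ ∈ Ṽ : ṽ_i ≥ x + c}| ≥ |Ṽ|·(1/(4(d+1)) − 1/r), and |{ṽ ∈ Ṽ : x ≤ ṽ_i ≤ x + c − 1}| ≤ 2c·(1+d)^{1/d}·|Ṽ|·(|V|^{−1/d} + 1/r). -/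
/-- `X'` is an `ε`-approximation of the finite point set `X ⊂ ℕ^d` with respect to
axis-parallel boxes: for every axis-parallel box (given by integer lower and upper bounds
per coordinate, which suffices for sets of integer points), the relative counts of `X'`
and `X` inside the box differ by at most `ε`. -/
def IsBoxApprox (d : ℕ) (X X' : Finset (Fin d → ℕ)) (ε : ℝ) : Prop :=
  ∀ lo hi : Fin d → ℤ,
    |((X'.filter fun v => ∀ j : Fin d, lo j ≤ (v j : ℤ) ∧ (v j : ℤ) ≤ hi j).card : ℝ) /
        (X'.card : ℝ) -
      ((X.filter fun v => ∀ j : Fin d, lo j ≤ (v j : ℤ) ∧ (v j : ℤ) ≤ hi j).card : ℝ) /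
        (X.card : ℝ)| ≤ ε

lemma sum_filter_card_le {α : Type*} [DecidableEq α] (V : Finset α) (m : ℕ)
    (p : ℕ → α → Prop) [∀ j, DecidablePred (p j)]
    (hdisj : ∀ a : α, ∀ j < m, ∀ j' < m, p j a → p j' a → j = j') :
    ∑ j ∈ Finset.range m, (V.filter (p j)).card ≤ V.card := by
  rw [← Finset.card_biUnion]
  · exact Finset.card_le_card (Finset.biUnion_subset.2 fun j _ => Finset.filter_subset _ _)
  · intro a ha b hb hab
    rw [Function.onFun, Finset.disjoint_left]
    rintro v hv1 hv2
    rw [Finset.mem_filter] at hv1 hv2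
    exact hab (hdisj v a (Finset.mem_range.1 ha) b (Finset.mem_range.1 hb) hv1.2 hv2.2)

set_option maxHeartbeats 1000000 in
/-- Given a `(1/r)`-approximation `Ṽ` of `V ⊂ ℕ^d`, there is a
`c`-divider `π(i,x)` whose sample-side left and right parts each contain at least
`|Ṽ|·(1/(4(d+1)) - 1/r)` samples and whose sample-side boundary part has at most
`2c·(1+d)^{1/d}·|Ṽ|·(|V|^{-1/d} + 1/r)` samples. -/
theorem sample_divider_exists (d c : ℕ) (hd : 2 ≤ d) (hc : 1 ≤ c)
    (V : Finset (Fin d → ℕ))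
    (hbig : 8 * ((d : ℝ) + 1) * (c : ℝ) ≤ ((V.card : ℝ) / ((d : ℝ) + 1)) ^ ((1 : ℝ) / (d : ℝ)))
    (r : ℝ) (hr : 0 < r)
    (W : Finset (Fin d → ℕ)) (hWV : W ⊆ V) (hWne : W.Nonempty)
    (happrox : IsBoxApprox d V W (1 / r)) :
    ∃ (i : Fin d) (x : ℤ),
      ((W.filter fun v => (v i : ℤ) ≤ x - 1).card : ℝ) ≥
        (W.card : ℝ) * (1 / (4 * ((d : ℝ) + 1)) - 1 / r) ∧
      ((W.filter fun v => x + (c : ℤ) ≤ (v i : ℤ)).card : ℝ) ≥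
        (W.card : ℝ) * (1 / (4 * ((d : ℝ) + 1)) - 1 / r) ∧
      ((W.filter fun v => x ≤ (v i : ℤ) ∧ (v i : ℤ) ≤ x + (c : ℤ) - 1).card : ℝ) ≤
        2 * (c : ℝ) * (1 + (d : ℝ)) ^ ((1 : ℝ) / (d : ℝ)) * (W.card : ℝ) *
          ((V.card : ℝ) ^ (-(1 : ℝ) / (d : ℝ)) + 1 / r) := by
  have hVne : V.Nonempty := hWne.mono hWV
  have hn0 : 0 < V.card := Finset.card_pos.2 hVne
  have hnpos : (0:ℝ) < (V.card : ℝ) := by exact_mod_cast hn0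
  set n : ℝ := (V.card : ℝ) with hn
  have hdR : (2:ℝ) ≤ (d:ℝ) := by exact_mod_cast hd
  have hd0 : (d:ℝ) ≠ 0 := by positivity
  have hcR : (1:ℝ) ≤ (c:ℝ) := by exact_mod_cast hc
  set k : ℝ := ((n / ((d:ℝ)+1)) ^ ((1:ℝ)/(d:ℝ))) with hk
  have hck : 8*((d:ℝ)+1)*(c:ℝ) ≤ k := hbig
  have hk24 : 24 ≤ k := le_trans (by nlinarith) hck
  have hkpos : (0:ℝ) < k := by linarith
  have hck24 : 24*(c:ℝ) ≤ k := le_trans (by nlinarith) hck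
  have hkd : k ^ (d:ℕ) = n / ((d:ℝ)+1) := by
    rw [hk, ← Real.rpow_natCast (((n / ((d:ℝ)+1)) ^ ((1:ℝ)/(d:ℝ)))) d,
      ← Real.rpow_mul (by positivity), one_div, inv_mul_cancel₀ hd0, Real.rpow_one]
  -- upper bound for all coordinates
  set N : ℕ := V.sup (fun v => Finset.univ.sup v) with hNdef
  have hN : ∀ v ∈ V, ∀ j, v j ≤ N := fun v hv j =>
    le_trans (Finset.le_sup (Finset.mem_univ j)) (Finset.le_sup hv)
  -- lower quantiles
  have hexl : ∀ i : Fin d, ∃ a : ℕ,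
      V.card ≤ 4*(d+1)*((V.filter fun v => v i ≤ a).card) := by
    intro i
    refine ⟨N, ?_⟩
    have : (V.filter fun v => v i ≤ N) = V :=
      Finset.filter_true_of_mem (fun v hv => hN v hv i)
    rw [this]; nlinarith [V.card]
  set l : Fin d → ℕ := fun i => Nat.find (hexl i) with hldef
  have hl_spec : ∀ i, V.card ≤ 4*(d+1)*((V.filter fun v => v i ≤ l i).card) :=
    fun i => Nat.find_spec (hexl i)
  have hl_min : ∀ i, ∀ b < l i, 4*(d+1)*((V.filter fun v => v i ≤ b).card) < V.card :=
    fun i b hb => Nat.lt_of_not_le (Nat.find_min (hexl i) hb)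
  -- upper quantiles
  have hQ0 : ∀ i : Fin d, V.card ≤ 4*(d+1)*((V.filter fun v => 0 ≤ v i).card) := by
    intro i
    have : (V.filter fun v => 0 ≤ v i) = V :=
      Finset.filter_true_of_mem (fun v hv => Nat.zero_le _)
    rw [this]; nlinarith [V.card]
  set u : Fin d → ℕ := fun i =>
    Nat.findGreatest (fun a => V.card ≤ 4*(d+1)*((V.filter fun v => a ≤ v i).card)) N
    with hudef
  have hu_spec : ∀ i, V.card ≤ 4*(d+1)*((V.filter fun v => u i ≤ v i).card) :=
    fun i => Nat.findGreatest_spec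
      (P := fun a => V.card ≤ 4*(d+1)*((V.filter fun v => a ≤ v i).card))
      (Nat.zero_le N) (hQ0 i)
  have hu_max : ∀ i, ∀ b, u i < b →
      4*(d+1)*((V.filter fun v => b ≤ v i).card) < V.card := by
    intro i b hb
    rcases le_or_gt b N with hbN | hbN
    · exact Nat.lt_of_not_le (Nat.findGreatest_is_greatest
        (P := fun a => V.card ≤ 4*(d+1)*((V.filter fun v => a ≤ v i).card)) hb hbN)
    · have : (V.filter fun v => b ≤ v i) = ∅ := by
        rw [Finset.filter_eq_empty_iff]
        intro v hv h
        exact absurd (le_trans h (hN v hv i)) (Nat.not_le.2 hbN)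
      rw [this]; simpa using hn0
  have castle : ∀ (b : ℕ), V.card ≤ 4*(d+1)*b → n/(4*((d:ℝ)+1)) ≤ (b:ℝ) := by
    intro b hb
    rw [div_le_iff₀ (by positivity)]
    have : ((V.card:ℕ):ℝ) ≤ ((4*(d+1)*b : ℕ):ℝ) := Nat.cast_le.2 hb
    push_cast at this
    linarith
  have castlt : ∀ (b : ℕ), 4*(d+1)*b < V.card → (b:ℝ) < n/(4*((d:ℝ)+1)) := by
    intro b hb
    rw [lt_div_iff₀ (by positivity)]
    have : ((4*(d+1)*b : ℕ):ℝ) < ((V.card:ℕ):ℝ) := Nat.cast_lt.2 hb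
    push_cast at this
    linarith
  have hl_specR : ∀ i, n/(4*((d:ℝ)+1)) ≤ ((V.filter fun v => v i ≤ l i).card : ℝ) :=
    fun i => castle _ (hl_spec i)
  have hu_specR : ∀ i, n/(4*((d:ℝ)+1)) ≤ ((V.filter fun v => u i ≤ v i).card : ℝ) :=
    fun i => castle _ (hu_spec i)
  have hl_ltR : ∀ i, ((V.filter fun v => v i < l i).card : ℝ) < n/(4*((d:ℝ)+1)) := by
    intro i
    rcases Nat.eq_zero_or_pos (l i) with h0 | hpos
    · have he : (V.filter fun v => v i < l i) = ∅ := by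
        rw [Finset.filter_eq_empty_iff]; intro v _; omega
      rw [he]; simp; positivity
    · have heq : (V.filter fun v => v i < l i) = (V.filter fun v => v i ≤ l i - 1) := by
        apply Finset.filter_congr; intro v _; constructor <;> intro h <;> omega
      rw [heq]
      exact castlt _ (hl_min i (l i - 1) (by omega))
  have hu_gtR : ∀ i, ((V.filter fun v => u i < v i).card : ℝ) < n/(4*((d:ℝ)+1)) := by
    intro i
    have heq : (V.filter fun v => u i < v i) = (V.filter fun v => u i + 1 ≤ v i) := by
      apply Finset.filter_congr; intro v _; constructor <;> intro h <;> omega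
    rw [heq]
    exact castlt _ (hu_max i (u i + 1) (by omega))
  have hlu : ∀ i, l i ≤ u i := by
    intro i
    rcases Nat.eq_zero_or_pos (l i) with h0 | hpos
    · rw [h0]; exact Nat.zero_le _
    by_contra hcon
    push_neg at hcon
    have heq : (V.filter fun v => v i ≤ l i - 1) = (V.filter fun v => ¬ l i ≤ v i) := by
      apply Finset.filter_congr; intro v _
      rw [Nat.not_le]
      constructor <;> intro h <;> omega
    have h2 := hl_min i (l i - 1) (Nat.sub_lt hpos Nat.one_pos)
    rw [heq] at h2
    have h1 := hu_max i (l i) hcon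
    have hsplit := Finset.card_filter_add_card_filter_not (s := V)
      (fun v : Fin d → ℕ => l i ≤ v i)
    nlinarith [h1, h2, hsplit, hn0, hd]
  -- slab threshold
  have hc0 : 0 < c := hc
  set T : ℝ := 2*(c:ℝ)*n/k with hT
  have hcZ : (1:ℤ) ≤ (c:ℤ) := by exact_mod_cast hc
  have hkey : ∃ i : Fin d, ∃ x : ℤ, ((l i : ℤ)+1 ≤ x) ∧ (x ≤ (u i:ℤ) - (c:ℤ)) ∧
      (((V.filter fun v => x ≤ (v i:ℤ) ∧ (v i:ℤ) ≤ x + (c:ℤ) - 1).card : ℝ) ≤ T) := by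
    by_contra hH
    push_neg at hH
    -- every admissible slab is heavy; derive width bound per dimension
    have hwidth : ∀ i, ((u i : ℝ) - (l i : ℝ)) < k/2 + 2*(c:ℝ) := by
      intro i
      by_contra hcon2
      push_neg at hcon2
      have hlu' := hlu i
      have haR : ((u i - l i : ℕ) : ℝ) = (u i:ℝ) - (l i:ℝ) := by
        rw [Nat.cast_sub hlu']
      set a : ℕ := u i - l i with ha
      set m : ℕ := (a - c)/c with hm
      have hadm : ∀ j : ℕ, j < m → T <
          ((V.filter fun v => ((l i:ℤ)+1+(j:ℤ)*(c:ℤ) ≤ (v i:ℤ) ∧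
            (v i:ℤ) ≤ (l i:ℤ)+1+(j:ℤ)*(c:ℤ) + (c:ℤ) - 1)).card : ℝ) := by
        intro j hj
        apply hH i ((l i:ℤ)+1+(j:ℤ)*(c:ℤ))
        · have : (0:ℤ) ≤ (j:ℤ)*(c:ℤ) := by positivity
          linarith
        · have h1 : (j+1)*c ≤ m*c := Nat.mul_le_mul_right c hj
          have h2 : m*c ≤ a - c := Nat.div_mul_le_self _ _
          have hm1 : 0 < m := lt_of_le_of_lt (Nat.zero_le j) hj
          have hc_le_mc : c ≤ m*c := Nat.le_mul_of_pos_left c hm1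
          have hac_pos : 0 < a - c := lt_of_lt_of_le (lt_of_lt_of_le hc0 hc_le_mc) h2
          have hca : c < a := Nat.lt_of_sub_pos hac_pos
          have h4 : (j+1)*c + c ≤ a := (Nat.le_sub_iff_add_le (le_of_lt hca)).1 (h1.trans h2)
          have h4Z : ((j:ℤ)+1)*(c:ℤ) + (c:ℤ) ≤ (u i:ℤ) - (l i:ℤ) := by
            have hcast := (Nat.cast_le (α := ℤ)).2 h4
            push_cast at hcast
            have haZ : ((a:ℕ):ℤ) = (u i:ℤ) - (l i:ℤ) := by
              rw [ha, Nat.cast_sub hlu']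
            linarith [hcast, haZ.ge, haZ.le]
          have h4Z' : (j:ℤ)*(c:ℤ) + 2*(c:ℤ) ≤ (u i:ℤ) - (l i:ℤ) := by linarith [h4Z]
          linarith [h4Z', hcZ]
      have hdisjkey : ∀ j j' : ℕ, j < j' → ∀ v : Fin d → ℕ,
          ((l i:ℤ)+1+(j:ℤ)*(c:ℤ) ≤ (v i:ℤ) ∧ (v i:ℤ) ≤ (l i:ℤ)+1+(j:ℤ)*(c:ℤ)+(c:ℤ)-1) →
          ((l i:ℤ)+1+(j':ℤ)*(c:ℤ) ≤ (v i:ℤ) ∧ (v i:ℤ) ≤ (l i:ℤ)+1+(j':ℤ)*(c:ℤ)+(c:ℤ)-1) →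
          False := by
        intro j j' hjj v h h'
        have hj1 : ((j:ℤ)+1)*(c:ℤ) ≤ (j':ℤ)*(c:ℤ) := by
          apply mul_le_mul_of_nonneg_right _ (by positivity)
          exact_mod_cast hjj
        have hj1' : (j:ℤ)*(c:ℤ) + (c:ℤ) ≤ (j':ℤ)*(c:ℤ) := by linarith [hj1]
        linarith [h.1, h.2, h'.1, h'.2, hj1']
      have hsumnat : ∑ j ∈ Finset.range m,
          ((V.filter (fun v => (l i:ℤ)+1+(j:ℤ)*(c:ℤ) ≤ (v i:ℤ) ∧
            (v i:ℤ) ≤ (l i:ℤ)+1+(j:ℤ)*(c:ℤ)+(c:ℤ)-1)).card) ≤ V.card := sum_filter_card_le V m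
        (fun j v => ((l i:ℤ)+1+(j:ℤ)*(c:ℤ) ≤ (v i:ℤ) ∧
          (v i:ℤ) ≤ (l i:ℤ)+1+(j:ℤ)*(c:ℤ)+(c:ℤ)-1))
        (by
          intro v j hj j' hj' h h'
          rcases lt_trichotomy j j' with h1 | h1 | h1
          · exact (hdisjkey j j' h1 v h h').elim
          · exact h1
          · exact (hdisjkey j' j h1 v h' h).elim)
      have hsumR : ∑ j ∈ Finset.range m,
          ((V.filter (fun v => (l i:ℤ)+1+(j:ℤ)*(c:ℤ) ≤ (v i:ℤ) ∧
            (v i:ℤ) ≤ (l i:ℤ)+1+(j:ℤ)*(c:ℤ)+(c:ℤ)-1)).card : ℝ) ≤ n := by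
        rw [← Nat.cast_sum]
        exact Nat.cast_le.2 hsumnat
      have hlowm : (m:ℝ) * T ≤ ∑ j ∈ Finset.range m,
          ((V.filter (fun v => (l i:ℤ)+1+(j:ℤ)*(c:ℤ) ≤ (v i:ℤ) ∧
            (v i:ℤ) ≤ (l i:ℤ)+1+(j:ℤ)*(c:ℤ)+(c:ℤ)-1)).card : ℝ) := by
        calc (m:ℝ)*T = ∑ _j ∈ Finset.range m, T := by
              rw [Finset.sum_const, Finset.card_range, nsmul_eq_mul]
          _ ≤ _ := Finset.sum_le_sum fun j hj => (hadm j (Finset.mem_range.1 hj)).le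
      have hmT : (m:ℝ)*T ≤ n := hlowm.trans hsumR
      have hmT' : (m:ℝ)*(2*(c:ℝ)*n) ≤ n*k := by
        rw [hT, ← mul_div_assoc] at hmT
        exact (div_le_iff₀ hkpos).1 hmT
      have hmk : (m:ℝ)*(2*(c:ℝ)) ≤ k := by
        by_contra hcon3
        push_neg at hcon3
        have h6 := mul_lt_mul_of_pos_right hcon3 hnpos
        nlinarith only [hmT', h6]
      have hdm := Nat.div_add_mod (a - c) c
      have hmodR : (((a-c) % c : ℕ):ℝ) < (c:ℝ) := by
        exact_mod_cast Nat.mod_lt _ hc0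
      have hdmR : (c:ℝ)*(m:ℝ) + (((a-c)%c : ℕ):ℝ) = ((a - c : ℕ):ℝ) := by
        exact_mod_cast hdm
      have hf2 : (a:ℝ) ≤ ((a - c : ℕ):ℝ) + (c:ℝ) := by exact_mod_cast le_tsub_add
      have hfin : (a:ℝ) < k/2 + 2*(c:ℝ) := by linarith only [hmk, hdmR, hmodR, hf2]
      rw [haR] at hfin
      linarith [hcon2]
    -- middle part
    have hdfin : (0:ℕ) < d := by omega
    have hMsub : (V.filter (fun v => ∀ i, l i ≤ v i ∧ v i ≤ u i)) ⊆ Finset.Icc l u := by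
      intro v hv
      rw [Finset.mem_filter] at hv
      rw [Finset.mem_Icc]
      exact ⟨fun i => (hv.2 i).1, fun i => (hv.2 i).2⟩
    have hMcard : (((V.filter (fun v => ∀ i, l i ≤ v i ∧ v i ≤ u i)).card):ℝ) ≤
        ∏ i : Fin d, ((u i:ℝ) - (l i:ℝ) + 1) := by
      have h1 : (V.filter (fun v => ∀ i, l i ≤ v i ∧ v i ≤ u i)).card ≤
          (Finset.Icc l u).card := Finset.card_le_card hMsub
      have h2 : (Finset.Icc l u).card = ∏ i : Fin d, (u i + 1 - l i) := by
        rw [Pi.card_Icc]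
        exact Finset.prod_congr rfl fun i _ => Nat.card_Icc _ _
      calc (((V.filter (fun v => ∀ i, l i ≤ v i ∧ v i ≤ u i)).card):ℝ)
          ≤ ((Finset.Icc l u).card : ℝ) := Nat.cast_le.2 h1
        _ = ∏ i : Fin d, ((u i + 1 - l i : ℕ):ℝ) := by rw [h2]; push_cast; rfl
        _ = ∏ i : Fin d, ((u i:ℝ) - (l i:ℝ) + 1) := Finset.prod_congr rfl fun i _ => by
            rw [Nat.cast_sub (le_trans (hlu i) (Nat.le_succ _))]
            push_cast
            ring
    have hfac : ∀ i : Fin d, (0:ℝ) ≤ (u i:ℝ) - (l i:ℝ) + 1 ∧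
        (u i:ℝ) - (l i:ℝ) + 1 ≤ 5/8*k := by
      intro i
      have h := hwidth i
      have hlu'' : ((l i):ℝ) ≤ (u i:ℝ) := Nat.cast_le.2 (hlu i)
      exact ⟨by linarith, by linarith only [h, hck24, hcR]⟩
    have hprod : ∏ i : Fin d, ((u i:ℝ) - (l i:ℝ) + 1) ≤ (5/8*k)^(d:ℕ) := by
      calc ∏ i : Fin d, ((u i:ℝ) - (l i:ℝ) + 1) ≤ ∏ _i : Fin d, (5/8*k) :=
            Finset.prod_le_prod (fun i _ => (hfac i).1) (fun i _ => (hfac i).2)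
        _ = (5/8*k)^(d:ℕ) := by
            rw [Finset.prod_const, Finset.card_univ, Fintype.card_fin]
    have hpow : ((5:ℝ)/8*k)^(d:ℕ) < k^(d:ℕ) := by
      apply pow_lt_pow_left₀ ?_ (by positivity) (by omega)
      linarith
    -- lower bound on the middle part
    have hVM := Finset.card_filter_add_card_filter_not (s := V)
      (fun v : Fin d → ℕ => ∀ i, l i ≤ v i ∧ v i ≤ u i)
    have hbad : ((V.filter fun v => ¬ ∀ i, l i ≤ v i ∧ v i ≤ u i).card : ℝ)
        < (d:ℝ) * (n / (2*((d:ℝ)+1))) := by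
      have hsub2 : (V.filter fun v => ¬ ∀ i, l i ≤ v i ∧ v i ≤ u i) ⊆
          Finset.univ.biUnion (fun i : Fin d =>
            (V.filter fun v => v i < l i) ∪ (V.filter fun v => u i < v i)) := by
        intro v hv
        rw [Finset.mem_filter] at hv
        obtain ⟨i, hi⟩ := not_forall.1 hv.2
        rw [Finset.mem_biUnion]
        refine ⟨i, Finset.mem_univ _, ?_⟩
        rw [Finset.mem_union, Finset.mem_filter, Finset.mem_filter]
        rcases Nat.lt_or_ge (v i) (l i) with h | h
        · exact Or.inl ⟨hv.1, h⟩
        · refine Or.inr ⟨hv.1, ?_⟩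
          by_contra hgt
          exact hi ⟨h, Nat.not_lt.1 hgt⟩
      have hb1 : ((V.filter fun v => ¬ ∀ i, l i ≤ v i ∧ v i ≤ u i).card : ℕ) ≤
          ∑ i : Fin d, ((V.filter fun v => v i < l i) ∪ (V.filter fun v => u i < v i)).card :=
        le_trans (Finset.card_le_card hsub2) (Finset.card_biUnion_le)
      have hb2 : ∀ i : Fin d,
          (((V.filter fun v => v i < l i) ∪ (V.filter fun v => u i < v i)).card : ℝ) <
            n / (2*((d:ℝ)+1)) := by
        intro i
        have hcu : ((V.filter fun v => v i < l i) ∪ (V.filter fun v => u i < v i)).card ≤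
            (V.filter fun v => v i < l i).card + (V.filter fun v => u i < v i).card :=
          Finset.card_union_le _ _
        have := add_lt_add (hl_ltR i) (hu_gtR i)
        have hcuR : (((V.filter fun v => v i < l i) ∪ (V.filter fun v => u i < v i)).card : ℝ) ≤
            ((V.filter fun v => v i < l i).card : ℝ) + ((V.filter fun v => u i < v i).card : ℝ) := by
          exact_mod_cast hcu
        have heq : n / (4*((d:ℝ)+1)) + n / (4*((d:ℝ)+1)) = n / (2*((d:ℝ)+1)) := by
          field_simp
          ring
        linarith only [hcuR, this, heq.ge, heq.le]
      have hb1R : ((V.filter fun v => ¬ ∀ i, l i ≤ v i ∧ v i ≤ u i).card : ℝ) ≤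
          ∑ i : Fin d, (((V.filter fun v => v i < l i) ∪ (V.filter fun v => u i < v i)).card : ℝ) := by
        rw [← Nat.cast_sum]
        exact Nat.cast_le.2 hb1
      have hne : (Finset.univ : Finset (Fin d)).Nonempty := ⟨⟨0, hdfin⟩, Finset.mem_univ _⟩
      have hb3 : ∑ i : Fin d, (((V.filter fun v => v i < l i) ∪ (V.filter fun v => u i < v i)).card : ℝ)
          < ∑ _i : Fin d, n / (2*((d:ℝ)+1)) :=
        Finset.sum_lt_sum_of_nonempty hne (fun i _ => hb2 i)
      have hb4 : ∑ _i : Fin d, n / (2*((d:ℝ)+1)) = (d:ℝ) * (n / (2*((d:ℝ)+1))) := by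
        rw [Finset.sum_const, Finset.card_univ, Fintype.card_fin, nsmul_eq_mul]
      linarith only [hb1R, hb3, hb4.ge, hb4.le]
    have hVMR : (((V.filter (fun v => ∀ i, l i ≤ v i ∧ v i ≤ u i)).card):ℝ) +
        ((V.filter fun v => ¬ ∀ i, l i ≤ v i ∧ v i ≤ u i).card : ℝ) = n := by
      rw [← Nat.cast_add]
      exact Nat.cast_inj.2 hVM
    -- combine everything
    have hup : (((V.filter (fun v => ∀ i, l i ≤ v i ∧ v i ≤ u i)).card):ℝ) < n/((d:ℝ)+1) := by
      have := hMcard.trans hprod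
      rw [hkd] at hpow
      linarith only [this, hpow]
    have hfrac : (d:ℝ) * (n / (2*((d:ℝ)+1))) + n/((d:ℝ)+1) ≤ n := by
      have h2 : (0:ℝ) < 2*((d:ℝ)+1) := by linarith
      have key : (d:ℝ) * (n / (2*((d:ℝ)+1))) + n/((d:ℝ)+1) = ((d:ℝ)+2) * n / (2*((d:ℝ)+1)) := by
        field_simp
      rw [key, div_le_iff₀ h2]
      nlinarith [mul_nonneg hnpos.le (by linarith : (0:ℝ) ≤ (d:ℝ))]
    linarith only [hbad, hVMR, hup, hfrac]
  -- use the good divider and transfer to W via the approximation property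
  obtain ⟨i, x, hx1, hx2, hslab⟩ := hkey
  have hWpos : (0:ℝ) < (W.card : ℝ) := by exact_mod_cast Finset.card_pos.2 hWne
  have transfer : ∀ (p : (Fin d → ℕ) → Prop) [DecidablePred p] (lo hi : Fin d → ℤ),
      (∀ v ∈ V, ((∀ j, lo j ≤ (v j:ℤ) ∧ (v j:ℤ) ≤ hi j) ↔ p v)) →
      |((W.filter p).card : ℝ)/(W.card:ℝ) - ((V.filter p).card : ℝ)/n| ≤ 1/r := by
    intro p _ lo hi hiff
    have h := happrox lo hi
    rw [Finset.filter_congr (fun v hv => hiff v (hWV hv)),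
        Finset.filter_congr (fun v hv => hiff v hv)] at h
    exact h
  refine ⟨i, x, ?_, ?_, ?_⟩
  · -- left part
    have hiff : ∀ v ∈ V, ((∀ j, (fun _ => (0:ℤ)) j ≤ (v j:ℤ) ∧
        (v j:ℤ) ≤ (Function.update (fun _ => (N:ℤ)) i (x-1)) j) ↔ ((v i:ℤ) ≤ x - 1)) := by
      intro v hv
      constructor
      · intro h
        have := (h i).2
        rwa [Function.update_self] at this
      · intro hp j
        refine ⟨Int.natCast_nonneg _, ?_⟩
        by_cases hj : j = i
        · subst hj; rwa [Function.update_self]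
        · rw [Function.update_of_ne hj]
          exact_mod_cast hN v hv j
    have habs := transfer (fun v => (v i:ℤ) ≤ x - 1) (fun _ => (0:ℤ))
      (Function.update (fun _ => (N:ℤ)) i (x-1)) hiff
    have hVleft : n/(4*((d:ℝ)+1)) ≤ ((V.filter fun v => (v i:ℤ) ≤ x - 1).card : ℝ) := by
      have hsub : (V.filter fun v => v i ≤ l i) ⊆ (V.filter fun v => (v i:ℤ) ≤ x - 1) := by
        intro v hv
        rw [Finset.mem_filter] at hv ⊢
        refine ⟨hv.1, ?_⟩
        have h5 : ((v i:ℕ):ℤ) ≤ (l i:ℤ) := by exact_mod_cast hv.2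
        linarith [hx1]
      exact le_trans (hl_specR i)
        (by exact_mod_cast Finset.card_le_card hsub)
    have h1 := (abs_le.1 habs).1
    have hVfrac : 1/(4*((d:ℝ)+1)) ≤ ((V.filter fun v => (v i:ℤ) ≤ x - 1).card:ℝ)/n := by
      rw [le_div_iff₀ hnpos]
      calc 1/(4*((d:ℝ)+1)) * n = n/(4*((d:ℝ)+1)) := by ring
        _ ≤ _ := hVleft
    have h2 : 1/(4*((d:ℝ)+1)) - 1/r ≤
        ((W.filter fun v => (v i:ℤ) ≤ x - 1).card:ℝ)/(W.card:ℝ) := by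
      linarith only [h1, hVfrac]
    rw [ge_iff_le]
    calc (W.card:ℝ) * (1/(4*((d:ℝ)+1)) - 1/r)
        ≤ (W.card:ℝ) * (((W.filter fun v => (v i:ℤ) ≤ x - 1).card:ℝ)/(W.card:ℝ)) :=
          mul_le_mul_of_nonneg_left h2 hWpos.le
      _ = ((W.filter fun v => (v i:ℤ) ≤ x - 1).card:ℝ) := by field_simp
  · -- right part
    have hiff : ∀ v ∈ V, ((∀ j, (Function.update (fun _ => (0:ℤ)) i (x + (c:ℤ))) j ≤ (v j:ℤ) ∧
        (v j:ℤ) ≤ (fun _ => (N:ℤ)) j) ↔ (x + (c:ℤ) ≤ (v i:ℤ))) := by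
      intro v hv
      constructor
      · intro h
        have := (h i).1
        rwa [Function.update_self] at this
      · intro hp j
        refine ⟨?_, by show ((v j:ℕ):ℤ) ≤ (N:ℤ); exact_mod_cast hN v hv j⟩
        by_cases hj : j = i
        · subst hj; rwa [Function.update_self]
        · rw [Function.update_of_ne hj]
          exact Int.natCast_nonneg _
    have habs := transfer (fun v => x + (c:ℤ) ≤ (v i:ℤ))
      (Function.update (fun _ => (0:ℤ)) i (x + (c:ℤ))) (fun _ => (N:ℤ)) hiff
    have hVright : n/(4*((d:ℝ)+1)) ≤ ((V.filter fun v => x + (c:ℤ) ≤ (v i:ℤ)).card : ℝ) := by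
      have hsub : (V.filter fun v => u i ≤ v i) ⊆ (V.filter fun v => x + (c:ℤ) ≤ (v i:ℤ)) := by
        intro v hv
        rw [Finset.mem_filter] at hv ⊢
        refine ⟨hv.1, ?_⟩
        have h5 : (u i:ℤ) ≤ ((v i:ℕ):ℤ) := by exact_mod_cast hv.2
        linarith [hx2]
      exact le_trans (hu_specR i)
        (by exact_mod_cast Finset.card_le_card hsub)
    have h1 := (abs_le.1 habs).1
    have hVfrac : 1/(4*((d:ℝ)+1)) ≤ ((V.filter fun v => x + (c:ℤ) ≤ (v i:ℤ)).card:ℝ)/n := by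
      rw [le_div_iff₀ hnpos]
      calc 1/(4*((d:ℝ)+1)) * n = n/(4*((d:ℝ)+1)) := by ring
        _ ≤ _ := hVright
    have h2 : 1/(4*((d:ℝ)+1)) - 1/r ≤
        ((W.filter fun v => x + (c:ℤ) ≤ (v i:ℤ)).card:ℝ)/(W.card:ℝ) := by
      linarith only [h1, hVfrac]
    rw [ge_iff_le]
    calc (W.card:ℝ) * (1/(4*((d:ℝ)+1)) - 1/r)
        ≤ (W.card:ℝ) * (((W.filter fun v => x + (c:ℤ) ≤ (v i:ℤ)).card:ℝ)/(W.card:ℝ)) :=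
          mul_le_mul_of_nonneg_left h2 hWpos.le
      _ = ((W.filter fun v => x + (c:ℤ) ≤ (v i:ℤ)).card:ℝ) := by field_simp
  · -- boundary part
    have hiff : ∀ v ∈ V, ((∀ j, (Function.update (fun _ => (0:ℤ)) i x) j ≤ (v j:ℤ) ∧
        (v j:ℤ) ≤ (Function.update (fun _ => (N:ℤ)) i (x + (c:ℤ) - 1)) j) ↔
        (x ≤ (v i:ℤ) ∧ (v i:ℤ) ≤ x + (c:ℤ) - 1)) := by
      intro v hv
      constructor
      · intro h
        have h5 := h i
        rwa [Function.update_self, Function.update_self] at h5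
      · intro hp j
        by_cases hj : j = i
        · subst hj
          rw [Function.update_self, Function.update_self]
          exact hp
        · rw [Function.update_of_ne hj, Function.update_of_ne hj]
          exact ⟨Int.natCast_nonneg _, by exact_mod_cast hN v hv j⟩
    have habs := transfer (fun v => x ≤ (v i:ℤ) ∧ (v i:ℤ) ≤ x + (c:ℤ) - 1)
      (Function.update (fun _ => (0:ℤ)) i x)
      (Function.update (fun _ => (N:ℤ)) i (x + (c:ℤ) - 1)) hiff
    have h1 := (abs_le.1 habs).2
    -- V-side slab fraction is at most 2c/k
    have hVfrac : ((V.filter fun v => x ≤ (v i:ℤ) ∧ (v i:ℤ) ≤ x + (c:ℤ) - 1).card : ℝ)/n ≤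
        2*(c:ℝ)/k := by
      rw [div_le_div_iff₀ hnpos hkpos]
      have := mul_le_mul_of_nonneg_right hslab hkpos.le
      rw [hT, div_mul_cancel₀ _ (ne_of_gt hkpos)] at this
      linarith only [this]
    have h2 : ((W.filter fun v => x ≤ (v i:ℤ) ∧ (v i:ℤ) ≤ x + (c:ℤ) - 1).card : ℝ)/(W.card:ℝ) ≤
        2*(c:ℝ)/k + 1/r := by
      linarith only [h1, hVfrac]
    have h3 : ((W.filter fun v => x ≤ (v i:ℤ) ∧ (v i:ℤ) ≤ x + (c:ℤ) - 1).card : ℝ) ≤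
        (W.card:ℝ) * (2*(c:ℝ)/k + 1/r) := by
      calc ((W.filter fun v => x ≤ (v i:ℤ) ∧ (v i:ℤ) ≤ x + (c:ℤ) - 1).card : ℝ)
          = (W.card:ℝ) * (((W.filter fun v => x ≤ (v i:ℤ) ∧ (v i:ℤ) ≤ x + (c:ℤ) - 1).card : ℝ)/(W.card:ℝ)) := by
            field_simp
        _ ≤ (W.card:ℝ) * (2*(c:ℝ)/k + 1/r) := mul_le_mul_of_nonneg_left h2 hWpos.le
    -- now rewrite k in terms of rpow quantities
    have hApos : (0:ℝ) < ((d:ℝ)+1) ^ ((1:ℝ)/(d:ℝ)) := Real.rpow_pos_of_pos (by linarith) _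
    have hBpos : (0:ℝ) < n ^ ((1:ℝ)/(d:ℝ)) := Real.rpow_pos_of_pos hnpos _
    have hkBA : k = n ^ ((1:ℝ)/(d:ℝ)) / ((d:ℝ)+1) ^ ((1:ℝ)/(d:ℝ)) := by
      rw [hk, Real.div_rpow hnpos.le (by positivity)]
    have hnB : (n:ℝ) ^ (-(1:ℝ)/(d:ℝ)) = (n ^ ((1:ℝ)/(d:ℝ)))⁻¹ := by
      rw [neg_div, Real.rpow_neg hnpos.le]
    have hone : (1:ℝ) ≤ ((d:ℝ)+1) ^ ((1:ℝ)/(d:ℝ)) :=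
      Real.one_le_rpow (by linarith) (by positivity)
    have hgoalco : (1 + (d:ℝ)) = ((d:ℝ)+1) := by ring
    rw [hgoalco, hnB]
    have hkexp : 2*(c:ℝ)/k = 2*(c:ℝ) * ((d:ℝ)+1) ^ ((1:ℝ)/(d:ℝ)) * (n ^ ((1:ℝ)/(d:ℝ)))⁻¹ := by
      rw [hkBA]
      field_simp
    rw [hkexp] at h3
    have hd9 : (0:ℝ) ≤ (W.card:ℝ) * (2*(c:ℝ) * ((d:ℝ)+1) ^ ((1:ℝ)/(d:ℝ)) - 1) * (1/r) := by
      apply mul_nonneg (mul_nonneg hWpos.le _) (by positivity)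
      nlinarith [hone, hcR]
    refine h3.trans ?_
    nlinarith [hd9]
end

section
/- Let d ≥ 2 and c ≥ 1 be integers, let V be a finite set of points in ℕ^d, let r > 0 be a real number, and let Ṽ ⊆ V be a nonempty (1/r)-approximation of V with respect to axis-parallel boxes. Suppose a dimension i ∈ {1,…,d} and an integer x satisfy the sample-side bounds: |{ṽ ∈ Ṽ : ṽ_i ≤ x − 1}| ≥ |Ṽ|·(1/(4(d+1)) − 1/r), |{ṽ ∈ Ṽ : ṽ_i ≥ x + c}| ≥ |Ṽ|·(1/(4(d+1)) − 1/r), and |{ṽ ∈ Ṽ : x ≤ ṽ_i ≤ x + c − 1}| ≤ 2c·(1+d)^{1/d}·|Ṽ|·(|V|^{−1/d} + 1/r). Then the same divider satisfies, for the ground set V: |{v ∈ V : v_i ≤ x − 1}| ≥ |V|·(1/(4(d+1)) − 2/r), |{v ∈ V : v_i ≥ x + c}| ≥ |V|·(1/(4(d+1)) − 2/r), and |{v ∈ V : x ≤ v_i ≤ x + c − 1}| ≤ 2c·(1+d)^{1/d}·|V|·(|V|^{−1/d} + 2/r). In particular, if r ≥ 16(d+1) then |{v ∈ V : v_i ≤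 x − 1}| ≥ |V|/(8(d+1)) and |{v ∈ V : v_i ≥ x + c}| ≥ |V|/(8(d+1)), and if additionally r = 2s^{1/d} with |V| > s > 0 then |{v ∈ V : x ≤ v_i ≤ x + c − 1}| ≤ 4c·(1+d)^{1/d}·|V|·s^{−1/d}. -/
set_option maxHeartbeats 1000000 in
/-- If a divider `π(i,x)` satisfies the sample-side bounds with respect
to a `(1/r)`-approximation `Ṽ` of `V`, then the corresponding ground-set bounds hold for
`V` (with `1/r` worsened to `2/r`). In particular, if `r ≥ 16(d+1)` then each side of the
divider contains at least `|V|/(8(d+1))` points, and if additionally `r = 2·s^{1/d}` with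
`|V| > s > 0` then the boundary contains at most `4c·(1+d)^{1/d}·|V|·s^{-1/d}` points. -/
theorem ground_divider_bounds (d c : ℕ) (hd : 2 ≤ d) (hc : 1 ≤ c)
    (V : Finset (Fin d → ℕ)) (r : ℝ) (hr : 0 < r)
    (W : Finset (Fin d → ℕ)) (hWV : W ⊆ V) (hWne : W.Nonempty)
    (happrox : IsBoxApprox d V W (1 / r))
    (i : Fin d) (x : ℤ)
    (hleft : ((W.filter fun v => (v i : ℤ) ≤ x - 1).card : ℝ) ≥
      (W.card : ℝ) * (1 / (4 * ((d : ℝ) + 1)) - 1 / r))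
    (hright : ((W.filter fun v => x + (c : ℤ) ≤ (v i : ℤ)).card : ℝ) ≥
      (W.card : ℝ) * (1 / (4 * ((d : ℝ) + 1)) - 1 / r))
    (hbound : ((W.filter fun v => x ≤ (v i : ℤ) ∧ (v i : ℤ) ≤ x + (c : ℤ) - 1).card : ℝ) ≤
      2 * (c : ℝ) * (1 + (d : ℝ)) ^ ((1 : ℝ) / (d : ℝ)) * (W.card : ℝ) *
        ((V.card : ℝ) ^ (-(1 : ℝ) / (d : ℝ)) + 1 / r)) :
    ((V.filter fun v => (v i : ℤ) ≤ x - 1).card : ℝ) ≥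
      (V.card : ℝ) * (1 / (4 * ((d : ℝ) + 1)) - 2 / r) ∧
    ((V.filter fun v => x + (c : ℤ) ≤ (v i : ℤ)).card : ℝ) ≥
      (V.card : ℝ) * (1 / (4 * ((d : ℝ) + 1)) - 2 / r) ∧
    ((V.filter fun v => x ≤ (v i : ℤ) ∧ (v i : ℤ) ≤ x + (c : ℤ) - 1).card : ℝ) ≤
      2 * (c : ℝ) * (1 + (d : ℝ)) ^ ((1 : ℝ) / (d : ℝ)) * (V.card : ℝ) *
        ((V.card : ℝ) ^ (-(1 : ℝ) / (d : ℝ)) + 2 / r) ∧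
    (16 * ((d : ℝ) + 1) ≤ r →
      ((V.filter fun v => (v i : ℤ) ≤ x - 1).card : ℝ) ≥ (V.card : ℝ) / (8 * ((d : ℝ) + 1)) ∧
      ((V.filter fun v => x + (c : ℤ) ≤ (v i : ℤ)).card : ℝ) ≥
        (V.card : ℝ) / (8 * ((d : ℝ) + 1))) ∧
    (∀ s : ℝ, 0 < s → s < (V.card : ℝ) → r = 2 * s ^ ((1 : ℝ) / (d : ℝ)) →
      ((V.filter fun v => x ≤ (v i : ℤ) ∧ (v i : ℤ) ≤ x + (c : ℤ) - 1).card : ℝ) ≤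
        4 * (c : ℝ) * (1 + (d : ℝ)) ^ ((1 : ℝ) / (d : ℝ)) * (V.card : ℝ) *
          s ^ (-(1 : ℝ) / (d : ℝ))) := by

  obtain ⟨w0, hw0⟩ := hWne
  have hVne : V.Nonempty := ⟨w0, hWV hw0⟩
  have hW0 : (0:ℝ) < (W.card : ℝ) := by exact_mod_cast Finset.card_pos.mpr ⟨w0, hw0⟩
  have hV0 : (0:ℝ) < (V.card : ℝ) := by exact_mod_cast Finset.card_pos.mpr hVne
  have hrinv : (0:ℝ) < 1 / r := by positivity
  set M : ℤ := ((V.sup fun v => Finset.univ.sup v : ℕ) : ℤ) with hMdef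
  have hM : ∀ v ∈ V, ∀ j : Fin d, (v j : ℤ) ≤ M := by
    intro v hv j
    have h1 : v j ≤ Finset.univ.sup v := Finset.le_sup (Finset.mem_univ j)
    have h2 : Finset.univ.sup v ≤ V.sup (fun v => Finset.univ.sup v) := Finset.le_sup hv
    rw [hMdef]; exact_mod_cast h1.trans h2
  have key : ∀ (P : (Fin d → ℕ) → Prop) [DecidablePred P] (lo hi : Fin d → ℤ),
      (∀ v ∈ V, ((∀ j : Fin d, lo j ≤ (v j:ℤ) ∧ (v j:ℤ) ≤ hi j) ↔ P v)) →
      |((W.filter P).card:ℝ)/(W.card:ℝ) - ((V.filter P).card:ℝ)/(V.card:ℝ)| ≤ 1/r := by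
    intro P _ lo hi hequiv
    have h := happrox lo hi
    rwa [Finset.filter_congr (fun v hv => hequiv v (hWV hv)),
         Finset.filter_congr (fun v hv => hequiv v hv)] at h
  -- the three box instantiations
  have habs1 := key (fun v => (v i : ℤ) ≤ x - 1)
      (fun _ => 0) (fun j => if j = i then x - 1 else M) (by
    intro v hv
    constructor
    · intro h; have := (h i).2; simpa using this
    · intro h j
      refine ⟨by positivity, ?_⟩
      by_cases hj : j = i
      · subst hj; simpa using h
      · simp only [hj, if_false]; exact hM v hv j)
  have habs2 := key (fun v => x + (c : ℤ) ≤ (v i : ℤ))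
      (fun j => if j = i then x + (c:ℤ) else 0) (fun _ => M) (by
    intro v hv
    constructor
    · intro h; have := (h i).1; simpa using this
    · intro h j
      refine ⟨?_, hM v hv j⟩
      by_cases hj : j = i
      · subst hj; simpa using h
      · simp only [hj, if_false]; positivity)
  have habs3 := key (fun v => x ≤ (v i : ℤ) ∧ (v i : ℤ) ≤ x + (c:ℤ) - 1)
      (fun j => if j = i then x else 0) (fun j => if j = i then x + (c:ℤ) - 1 else M) (by
    intro v hv
    constructor
    · intro h; have := h i; simpa using this
    · intro h j
      by_cases hj : j = i
      · subst hj; simpa using h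
      · simp only [hj, if_false]; exact ⟨by positivity, hM v hv j⟩)
  set e : ℝ := 1 / (4 * ((d:ℝ) + 1)) - 2 / r with he
  set K : ℝ := 2 * (c:ℝ) * (1 + (d:ℝ)) ^ ((1:ℝ)/(d:ℝ)) with hKdef
  have hd0 : (0:ℝ) < (d:ℝ) := by positivity
  have h1d : (0:ℝ) ≤ (1:ℝ)/(d:ℝ) := by positivity
  have hK1 : (1:ℝ) ≤ K := by
    have hc1 : (1:ℝ) ≤ (c:ℝ) := by exact_mod_cast hc
    have hp : (1:ℝ) ≤ (1 + (d:ℝ)) ^ ((1:ℝ)/(d:ℝ)) :=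
      Real.one_le_rpow (by linarith) h1d
    nlinarith
  -- conclusion 1
  have c1 : ((V.filter fun v => (v i : ℤ) ≤ x - 1).card : ℝ) ≥ (V.card : ℝ) * e := by
    have hWfrac : ((W.filter fun v => (v i : ℤ) ≤ x - 1).card:ℝ)/(W.card:ℝ) ≥
        1 / (4 * ((d:ℝ) + 1)) - 1/r := by
      rw [ge_iff_le, le_div_iff₀ hW0, mul_comm]
      exact hleft
    have habs := abs_le.mp habs1
    have hVfrac : ((V.filter fun v => (v i : ℤ) ≤ x - 1).card:ℝ)/(V.card:ℝ) ≥ e := by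
      rw [he]; have := habs.2
      have h2r : 2 / r = 1/r + 1/r := by ring
      linarith
    have := (le_div_iff₀ hV0).mp hVfrac
    linarith [mul_comm ((V.card:ℝ)) e]
  -- conclusion 2
  have c2 : ((V.filter fun v => x + (c : ℤ) ≤ (v i : ℤ)).card : ℝ) ≥ (V.card : ℝ) * e := by
    have hWfrac : ((W.filter fun v => x + (c : ℤ) ≤ (v i : ℤ)).card:ℝ)/(W.card:ℝ) ≥
        1 / (4 * ((d:ℝ) + 1)) - 1/r := by
      rw [ge_iff_le, le_div_iff₀ hW0, mul_comm]
      exact hright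
    have habs := abs_le.mp habs2
    have hVfrac : ((V.filter fun v => x + (c : ℤ) ≤ (v i : ℤ)).card:ℝ)/(V.card:ℝ) ≥ e := by
      rw [he]
      have h2r : 2 / r = 1/r + 1/r := by ring
      linarith [habs.2]
    have := (le_div_iff₀ hV0).mp hVfrac
    linarith [mul_comm ((V.card:ℝ)) e]
  -- conclusion 3
  set u : ℝ := (V.card : ℝ) ^ (-(1:ℝ)/(d:ℝ)) with hu
  have c3 : ((V.filter fun v => x ≤ (v i : ℤ) ∧ (v i : ℤ) ≤ x + (c:ℤ) - 1).card : ℝ) ≤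
      K * (V.card : ℝ) * (u + 2/r) := by
    have hWfrac : ((W.filter fun v => x ≤ (v i : ℤ) ∧ (v i : ℤ) ≤ x + (c:ℤ) - 1).card:ℝ)/(W.card:ℝ)
        ≤ K * (u + 1/r) := by
      rw [div_le_iff₀ hW0]
      have heq : K * (W.card:ℝ) * (u + 1/r) = K * (u + 1/r) * (W.card:ℝ) := by ring
      linarith
    have habs := abs_le.mp habs3
    have hVfrac : ((V.filter fun v => x ≤ (v i : ℤ) ∧ (v i : ℤ) ≤ x + (c:ℤ) - 1).card:ℝ)/(V.card:ℝ)
        ≤ K * (u + 2/r) := by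
      have heq : K * (u + 2/r) - K * (u + 1/r) = K * (1/r) := by ring
      have hge : 1 * (1/r) ≤ K * (1/r) := mul_le_mul_of_nonneg_right hK1 hrinv.le
      linarith [habs.1]
    have := (div_le_iff₀ hV0).mp hVfrac
    have heq : K * (u + 2/r) * (V.card:ℝ) = K * (V.card:ℝ) * (u + 2/r) := by ring
    linarith
  refine ⟨c1, c2, c3, ?_, ?_⟩
  · intro h16
    have hdp : (0:ℝ) < (d:ℝ) + 1 := by positivity
    have h2r : 2 / r ≤ 1 / (8 * ((d:ℝ) + 1)) := by
      rw [div_le_div_iff₀ hr (by positivity)]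
      nlinarith
    have hee : (V.card:ℝ) / (8 * ((d:ℝ)+1)) ≤ (V.card:ℝ) * e := by
      rw [he, div_eq_mul_inv]
      have : (8 * ((d:ℝ)+1))⁻¹ = 1 / (8 * ((d:ℝ)+1)) := by ring
      rw [this]
      have hestep : 1 / (8 * ((d:ℝ)+1)) ≤ 1 / (4 * ((d:ℝ)+1)) - 2/r := by
        have : 1 / (8 * ((d:ℝ)+1)) + 1 / (8 * ((d:ℝ)+1)) = 1 / (4 * ((d:ℝ)+1)) := by
          field_simp; ring
        linarith
      exact mul_le_mul_of_nonneg_left hestep hV0.le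
    exact ⟨le_trans hee c1, le_trans hee c2⟩
  · intro s hs hsV hrs
    have hs1d : (0:ℝ) < s ^ ((1:ℝ)/(d:ℝ)) := Real.rpow_pos_of_pos hs _
    have h2rs : 2 / r = s ^ (-(1:ℝ)/(d:ℝ)) := by
      rw [hrs, neg_div, Real.rpow_neg hs.le]
      field_simp
    have huv : u ≤ s ^ (-(1:ℝ)/(d:ℝ)) := by
      rw [hu, neg_div, Real.rpow_neg hs.le, Real.rpow_neg hV0.le]
      have hle : s ^ ((1:ℝ)/(d:ℝ)) ≤ (V.card:ℝ) ^ ((1:ℝ)/(d:ℝ)) :=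
        Real.rpow_le_rpow hs.le hsV.le h1d
      exact inv_anti₀ hs1d hle
    have hKV : (0:ℝ) ≤ K * (V.card:ℝ) := mul_nonneg (le_trans zero_le_one hK1) hV0.le
    have : K * (V.card:ℝ) * (u + 2/r) ≤ K * (V.card:ℝ) * (2 * s ^ (-(1:ℝ)/(d:ℝ))) := by
      apply mul_le_mul_of_nonneg_left _ hKV
      rw [h2rs]; linarith
    calc ((V.filter fun v => x ≤ (v i : ℤ) ∧ (v i : ℤ) ≤ x + (c:ℤ) - 1).card : ℝ)
        ≤ K * (V.card:ℝ) * (2 * s ^ (-(1:ℝ)/(d:ℝ))) := le_trans c3 this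
      _ = 4 * (c:ℝ) * (1 + (d:ℝ)) ^ ((1:ℝ)/(d:ℝ)) * (V.card:ℝ) * s ^ (-(1:ℝ)/(d:ℝ)) := by
          rw [hKdef]; ring
end

section
/- Let W be a finite vertex set, let T be a tree on W (a connected acyclic simple graph with vertex set W), and let F be an acyclic simple graph on W with exactly k edges. For each edge {u,v} of F, let P_T(u,v) denote the unique path in T from u to v. Then the union, over all edges {u,v} of F, of the edge sets of the paths P_T(u,v) contains at least k edges of T. -/
open SimpleGraph

private lemma acyclic_anti {V : Type*} {G H : SimpleGraph V} (h : G ≤ H)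
    (hH : H.IsAcyclic) : G.IsAcyclic :=
  fun _ c hc => hH (c.mapLe h) (hc.mapLe h)

/-- Splitting reachability across a deleted edge. -/
private lemma reach_split {V : Type*} {G : SimpleGraph V} (u v : V) {x y : V}
    (p : G.Walk x y) :
    (G.deleteEdges {s(u,v)}).Reachable x y ∨
    ((G.deleteEdges {s(u,v)}).Reachable x u ∧ (G.deleteEdges {s(u,v)}).Reachable v y) ∨
    ((G.deleteEdges {s(u,v)}).Reachable x v ∧ (G.deleteEdges {s(u,v)}).Reachable u y) := by
  induction p with
  | nil => exact Or.inl (Reachable.refl _)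
  | @cons x z y a q ih =>
    by_cases he : s(x, z) = s(u, v)
    · rw [Sym2.eq_iff] at he
      rcases he with ⟨rfl, rfl⟩ | ⟨rfl, rfl⟩
      · rcases ih with h1 | ⟨h1, h2⟩ | ⟨h1, h2⟩
        · exact Or.inr (Or.inl ⟨Reachable.refl _, h1⟩)
        · exact Or.inr (Or.inl ⟨Reachable.refl _, h2⟩)
        · exact Or.inl h2
      · rcases ih with h1 | ⟨h1, h2⟩ | ⟨h1, h2⟩
        · exact Or.inr (Or.inr ⟨Reachable.refl _, h1⟩)
        · exact Or.inl h2
        · exact Or.inr (Or.inr ⟨Reachable.refl _, h2⟩)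
    · have ha' : (G.deleteEdges {s(u,v)}).Adj x z := by
        rw [deleteEdges_adj]
        exact ⟨a, by simpa using he⟩
      rcases ih with h1 | ⟨h1, h2⟩ | ⟨h1, h2⟩
      · exact Or.inl (ha'.reachable.trans h1)
      · exact Or.inr (Or.inl ⟨ha'.reachable.trans h1, h2⟩)
      · exact Or.inr (Or.inr ⟨ha'.reachable.trans h1, h2⟩)

/-- The edge–vertex–component formula for forests. -/
private lemma forest_card {W : Type*} [Fintype W] :
    ∀ (n : ℕ) (G : SimpleGraph W), G.IsAcyclic → G.edgeSet.ncard = n →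
      n + Nat.card G.ConnectedComponent = Nat.card W := by
  intro n
  induction n with
  | zero =>
    intro G _ h0
    have hGbot : G = ⊥ := by
      rw [← edgeSet_eq_empty]
      exact (Set.ncard_eq_zero (Set.toFinite _)).mp h0
    subst hGbot
    have hbij : Function.Bijective
        ((⊥ : SimpleGraph W).connectedComponentMk) := by
      constructor
      · intro a b h
        exact reachable_bot.mp (ConnectedComponent.exact h)
      · exact Quot.mk_surjective
    simpa using (Nat.card_eq_of_bijective _ hbij).symm
  | succ n ih =>
    intro G hG hcard
    classical
    have hne : G.edgeSet.Nonempty := by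
      rw [Set.nonempty_iff_ne_empty]
      intro h
      rw [h] at hcard
      simp at hcard
    obtain ⟨e, he⟩ := hne
    obtain ⟨u, v, huv, rfl⟩ : ∃ u v, G.Adj u v ∧ s(u, v) = e := by
      revert he
      refine Sym2.ind (fun a b hab => ⟨a, b, hab, rfl⟩) e
    set G' := G.deleteEdges {s(u, v)} with hG'def
    have hG' : G'.IsAcyclic := acyclic_anti (deleteEdges_le _) hG
    have hcard' : G'.edgeSet.ncard = n := by
      rw [hG'def, edgeSet_deleteEdges, Set.ncard_diff_singleton_of_mem he, hcard]
      omega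
    have hbr : ¬ G'.Reachable u v :=
      ((isAcyclic_iff_forall_adj_isBridge.mp hG) huv)
    -- the natural map on components
    let φ : G'.ConnectedComponent → G.ConnectedComponent :=
      ConnectedComponent.lift G.connectedComponentMk
        (fun a b p _ => ConnectedComponent.sound (p.mapLe (deleteEdges_le _)).reachable)
    have key : ∀ x y : W, G.connectedComponentMk x = G.connectedComponentMk y →
        G'.connectedComponentMk x = G'.connectedComponentMk y ∨
        (G'.connectedComponentMk x = G'.connectedComponentMk u ∧
          G'.connectedComponentMk y = G'.connectedComponentMk v) ∨
        (G'.connectedComponentMk x = G'.connectedComponentMk v ∧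
          G'.connectedComponentMk y = G'.connectedComponentMk u) := by
      intro x y h
      obtain ⟨p⟩ := ConnectedComponent.exact h
      rcases reach_split u v p with h1 | ⟨h1, h2⟩ | ⟨h1, h2⟩
      · exact Or.inl (ConnectedComponent.sound h1)
      · exact Or.inr (Or.inl ⟨ConnectedComponent.sound h1,
          (ConnectedComponent.sound h2).symm⟩)
      · exact Or.inr (Or.inr ⟨ConnectedComponent.sound h1,
          (ConnectedComponent.sound h2).symm⟩)
    have key2 : Nat.card G'.ConnectedComponent = Nat.card G.ConnectedComponent + 1 := by
      rw [← Finite.card_option]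
      refine Nat.card_eq_of_bijective
        (fun d => if d = G'.connectedComponentMk v then none else some (φ d)) ⟨?_, ?_⟩
      · intro d1 d2
        induction d1 using SimpleGraph.ConnectedComponent.ind with | _ x =>
        induction d2 using SimpleGraph.ConnectedComponent.ind with | _ y =>
        intro hf
        dsimp only at hf
        by_cases h1 : G'.connectedComponentMk x = G'.connectedComponentMk v <;>
          by_cases h2 : G'.connectedComponentMk y = G'.connectedComponentMk v
        · rw [h1, h2]
        · rw [if_pos h1, if_neg h2] at hf
          exact absurd hf (by simp)
        · rw [if_neg h1, if_pos h2] at hf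
          exact absurd hf (by simp)
        · rw [if_neg h1, if_neg h2] at hf
          have hφ : G.connectedComponentMk x = G.connectedComponentMk y :=
            Option.some.inj hf
          rcases key x y hφ with h | ⟨hxu, hyv⟩ | ⟨hxv, hyu⟩
          · exact h
          · exact absurd hyv h2
          · exact absurd hxv h1
      · intro o
        match o with
        | none => exact ⟨G'.connectedComponentMk v, by simp⟩
        | some c =>
          induction c using SimpleGraph.ConnectedComponent.ind with | _ w =>
          by_cases hw : G'.connectedComponentMk w = G'.connectedComponentMk v
          · refine ⟨G'.connectedComponentMk u, ?_⟩
            have hu : G'.connectedComponentMk u ≠ G'.connectedComponentMk v :=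
              fun h => hbr (ConnectedComponent.exact h)
            dsimp only
            rw [if_neg hu]
            have : G.connectedComponentMk u = G.connectedComponentMk w :=
              ConnectedComponent.sound
                (huv.reachable.trans
                  ((ConnectedComponent.exact hw).mono (deleteEdges_le _)).symm)
            exact congrArg some this.symm ▸ rfl
          · exact ⟨G'.connectedComponentMk w, by dsimp only; rw [if_neg hw]; rfl⟩
    have hIH := ih G' hG' hcard'
    omega

/-- Let `T` be a tree on a finite vertex set `W` and `F` an acyclic
simple graph on `W` with exactly `k` edges. The union, over the edges `{u,v}` of `F`, of
the edge sets of the unique `T`-paths from `u` to `v` contains at least `k` edges of `T`. -/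
theorem forest_paths_cover_many_tree_edges
    {W : Type*} [Fintype W] (T F : SimpleGraph W)
    (hT : T.IsTree) (hF : F.IsAcyclic) (k : ℕ) (hk : F.edgeSet.ncard = k) :
    k ≤ {e : Sym2 W | e ∈ T.edgeSet ∧
      ∃ u v : W, F.Adj u v ∧ ∃ p : T.Walk u v, p.IsPath ∧ e ∈ p.edges}.ncard := by
  classical
  set S : Set (Sym2 W) := {e : Sym2 W | e ∈ T.edgeSet ∧
      ∃ u v : W, F.Adj u v ∧ ∃ p : T.Walk u v, p.IsPath ∧ e ∈ p.edges} with hSdef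
  have hSsub : S ⊆ T.edgeSet := fun e he => he.1
  set H : SimpleGraph W := SimpleGraph.fromEdgeSet S with hHdef
  have hHle : H ≤ T := by
    intro a b hab
    rw [hHdef, fromEdgeSet_adj] at hab
    exact (mem_edgeSet T).mp (hSsub hab.1)
  have hHE : H.edgeSet = S := by
    rw [hHdef, edgeSet_fromEdgeSet]
    ext e
    exact ⟨fun h => h.1, fun h => ⟨h, T.not_isDiag_of_mem_edgeSet (hSsub h)⟩⟩
  have hHacyclic : H.IsAcyclic := acyclic_anti hHle hT.2
  have hreach : ∀ a b : W, F.Adj a b → H.Reachable a b := by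
    intro a b hab
    obtain ⟨w0⟩ := hT.isConnected.preconnected a b
    obtain ⟨p, hp⟩ := w0.toPath
    have hedges : ∀ e, e ∈ p.edges → e ∈ H.edgeSet := by
      intro e he'
      rw [hHE]
      exact ⟨p.edges_subset_edgeSet he', a, b, hab, p, hp, he'⟩
    exact ⟨p.transfer H hedges⟩
  have hreach2 : ∀ a b : W, F.Reachable a b → H.Reachable a b := by
    intro a b h
    obtain ⟨p⟩ := h
    induction p with
    | nil => exact Reachable.refl _
    | cons a q ih => exact (hreach _ _ a).trans ih
  let ψ : F.ConnectedComponent → H.ConnectedComponent :=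
    ConnectedComponent.lift H.connectedComponentMk
      (fun a b p _ => ConnectedComponent.sound (hreach2 _ _ p.reachable))
  have hsurj : Function.Surjective ψ := by
    intro c
    induction c using SimpleGraph.ConnectedComponent.ind with | _ w =>
    exact ⟨F.connectedComponentMk w, rfl⟩
  have hle : Nat.card H.ConnectedComponent ≤ Nat.card F.ConnectedComponent :=
    Nat.card_le_card_of_surjective ψ hsurj
  have h1 := forest_card F.edgeSet.ncard F hF rfl
  have h2 := forest_card H.edgeSet.ncard H hHacyclic rfl
  rw [hHE] at h2
  omega
end

section
/- Let d ≥ 1, let P be a finite set of n ≥ 1 distinct points in ℝ^d, and define the weight of a pair {u,v} ⊆ P as the Euclidean distance dist(u,v). Let T* be a Euclidean minimum spanning tree of P, let ρ > 0, and let T be any spanning tree of the complete graph on P such that for every edge {u,v} of T*, every edge {x,y} on the unique path in T from u to v satisfies dist(x,y) ≤ (1+2ρ)·dist(u,v). Then the total edge weight of T is at most (1+2ρ) times the total edge weight of T*. -/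
/-- The Euclidean weight of an (unordered) edge on points of `P`. -/
noncomputable def edgeDist {d : ℕ} (P : Finset (EuclideanSpace ℝ (Fin d))) :
    Sym2 {p // p ∈ P} → ℝ :=
  Sym2.lift ⟨fun u v => dist (u : EuclideanSpace ℝ (Fin d)) (v : EuclideanSpace ℝ (Fin d)),
    fun u v => dist_comm _ _⟩

/-- A connected graph on a finite nonempty vertex set has at least `card V - 1` edges. -/
lemma connected_card_le_edges {V : Type*} [Fintype V] (G : SimpleGraph V)
    [Fintype G.edgeSet] (hG : G.Connected) :
    Fintype.card V ≤ G.edgeFinset.card + 1 := by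
  classical
  obtain ⟨r⟩ := hG.nonempty
  -- every vertex `v ≠ r` has a neighbor strictly closer to `r`
  have key : ∀ v : V, v ≠ r → ∃ u, G.Adj u v ∧ G.dist r u + 1 = G.dist r v := by
    intro v hv
    obtain ⟨p, hp⟩ := (hG.preconnected r v).exists_walk_length_eq_dist
    have hnn : ¬ p.Nil := SimpleGraph.Walk.not_nil_of_ne (Ne.symm hv)
    have hnn' : ¬ p.reverse.Nil := by
      rw [SimpleGraph.Walk.nil_iff_length_eq] at hnn ⊢
      simpa using hnn
    obtain ⟨u, hadj, q, hq⟩ := SimpleGraph.Walk.not_nil_iff.mp hnn'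
    refine ⟨u, hadj.symm, ?_⟩
    have hlen : q.length + 1 = G.dist r v := by
      have := congrArg SimpleGraph.Walk.length hq
      simp only [SimpleGraph.Walk.length_reverse, SimpleGraph.Walk.length_cons] at this ⊢
      omega
    have h1 : G.dist r u ≤ q.length := by
      have := G.dist_le q.reverse
      simpa [SimpleGraph.dist_comm] using this
    have h2 : G.dist r v ≤ G.dist r u + 1 := by
      have htri := hG.dist_triangle (u := r) (v := u) (w := v)
      have : G.dist u v ≤ 1 := by
        rw [← SimpleGraph.dist_eq_one_iff_adj.mpr hadj.symm]
      omega
    omega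
  choose nb hnb hnbd using key
  set f : V → Sym2 V := fun v => if h : v ≠ r then s(nb v h, v) else s(r, r) with hf
  have hmaps : ∀ v ∈ Finset.univ.erase r, f v ∈ G.edgeFinset := by
    intro v hv
    have hv' : v ≠ r := (Finset.mem_erase.mp hv).1
    simp only [hf, dif_pos hv', SimpleGraph.mem_edgeFinset, SimpleGraph.mem_edgeSet]
    exact hnb v hv'
  have hinj : Set.InjOn f (Finset.univ.erase r) := by
    intro v1 h1 v2 h2 heq
    have hv1 : v1 ≠ r := (Finset.mem_erase.mp h1).1
    have hv2 : v2 ≠ r := (Finset.mem_erase.mp h2).1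
    simp only [hf, dif_pos hv1, dif_pos hv2, Sym2.eq_iff] at heq
    rcases heq with ⟨-, h⟩ | ⟨ha, hb⟩
    · exact h
    · exfalso
      have e1 := hnbd v1 hv1
      have e2 := hnbd v2 hv2
      rw [ha] at e1; rw [← hb] at e2
      omega
  have hcard := Finset.card_le_card_of_injOn f hmaps hinj
  have : (Finset.univ.erase r).card = Fintype.card V - 1 := by
    rw [Finset.card_erase_of_mem (Finset.mem_univ r), Finset.card_univ]
  have hpos : 1 ≤ Fintype.card V := Fintype.card_pos_iff.mpr hG.nonempty
  omega

lemma edgeDist_nonneg {d : ℕ} (P : Finset (EuclideanSpace ℝ (Fin d)))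
    (e : Sym2 {p // p ∈ P}) : 0 ≤ edgeDist P e := by
  induction e using Sym2.ind with
  | _ x y =>
    exact dist_nonneg (α := EuclideanSpace ℝ (Fin d)) (x := ↑x) (y := ↑y)

open scoped Classical in
/-- **Overall approximation from edge-wise approximation.** If `T*` is a
Euclidean minimum spanning tree of `P` and `T` is a spanning tree such that for every edge
`{u,v}` of `T*`, every edge on the unique `T`-path from `u` to `v` has weight at most
`(1+2ρ)·dist(u,v)`, then the total weight of `T` is at most `(1+2ρ)` times that of `T*`. -/
theorem emst_overall_approximation (d : ℕ) (hd : 1 ≤ d)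
    (P : Finset (EuclideanSpace ℝ (Fin d))) (hP : P.Nonempty)
    (Tstar T : SimpleGraph {p // p ∈ P})
    (hTstar : Tstar.IsTree) (hT : T.IsTree)
    (hmin : ∀ T' : SimpleGraph {p // p ∈ P}, T'.IsTree →
      ∑ e ∈ Tstar.edgeFinset, edgeDist P e ≤ ∑ e ∈ T'.edgeFinset, edgeDist P e)
    (ρ : ℝ) (hρ : 0 < ρ)
    (happrox : ∀ u v : {p // p ∈ P}, Tstar.Adj u v →
      ∀ p : T.Walk u v, p.IsPath → ∀ e ∈ p.edges,
        edgeDist P e ≤ (1 + 2 * ρ) *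
          dist (u : EuclideanSpace ℝ (Fin d)) (v : EuclideanSpace ℝ (Fin d))) :
    ∑ e ∈ T.edgeFinset, edgeDist P e ≤ (1 + 2 * ρ) * ∑ e ∈ Tstar.edgeFinset, edgeDist P e := by
  classical
  haveI hne : Nonempty {p // p ∈ P} := ⟨⟨hP.choose, hP.choose_spec⟩⟩
  -- choose, for each unordered pair, explicit endpoints
  have hrep : ∀ e : Sym2 {p // p ∈ P}, ∃ x : {p // p ∈ P} × {p // p ∈ P},
      s(x.1, x.2) = e := by
    intro e
    induction e using Sym2.ind with
    | _ x y => exact ⟨(x, y), rfl⟩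
  choose ep hep using hrep
  -- choose, for each ordered pair, the unique path in T
  choose path hpath using fun u v : {p // p ∈ P} => (hT.existsUnique_path u v).exists
  -- the candidate set for each edge of T
  set t : Sym2 {p // p ∈ P} → Finset (Sym2 {p // p ∈ P}) := fun f =>
    Tstar.edgeFinset.filter (fun e => f ∈ (path (ep e).1 (ep e).2).edges) with ht
  -- Hall's condition
  have hall : ∀ s : Finset {f // f ∈ T.edgeFinset},
      s.card ≤ (s.biUnion fun f => t ↑f).card := by
    intro s
    set F : Finset (Sym2 {p // p ∈ P}) := s.image Subtype.val with hF
    set N : Finset (Sym2 {p // p ∈ P}) := s.biUnion (fun f => t ↑f) with hN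
    set S : Set (Sym2 {p // p ∈ P}) :=
      (↑(T.edgeFinset \ F) ∪ ↑N : Set (Sym2 {p // p ∈ P})) with hS
    set G' : SimpleGraph {p // p ∈ P} := SimpleGraph.fromEdgeSet S with hG'
    haveI : Fintype G'.edgeSet := Fintype.ofFinite _
    -- G' reaches between the chosen endpoints of every Tstar-edge
    have hmain : ∀ e ∈ Tstar.edgeSet, G'.Reachable (ep e).1 (ep e).2 := by
      intro e heE
      by_cases hcase : ∃ f0 ∈ (path (ep e).1 (ep e).2).edges, f0 ∈ F
      · obtain ⟨f0, hf0p, hf0F⟩ := hcase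
        obtain ⟨f, hfs, rfl⟩ := Finset.mem_image.mp hf0F
        have heN : e ∈ N := by
          refine Finset.mem_biUnion.mpr ⟨f, hfs, ?_⟩
          exact Finset.mem_filter.mpr ⟨SimpleGraph.mem_edgeFinset.mpr heE, hf0p⟩
        have hne2 : (ep e).1 ≠ (ep e).2 := by
          intro hcontra
          have : e.IsDiag := by
            rw [← hep e, hcontra]
            exact Sym2.mk_isDiag_iff.mpr rfl
          exact Tstar.not_isDiag_of_mem_edgeSet heE this
        have : G'.Adj (ep e).1 (ep e).2 := by
          rw [hG', SimpleGraph.fromEdgeSet_adj]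
          refine ⟨?_, hne2⟩
          rw [hep e]
          exact Or.inr heN
        exact this.reachable
      · push_neg at hcase
        have hsub : ∀ f0 ∈ (path (ep e).1 (ep e).2).edges, f0 ∈ G'.edgeSet := by
          intro f0 hf0
          have h1 : f0 ∈ T.edgeSet := (path (ep e).1 (ep e).2).edges_subset_edgeSet hf0
          have h2 : f0 ∉ F := hcase f0 hf0
          rw [hG', SimpleGraph.edgeSet_fromEdgeSet]
          refine ⟨Or.inl ?_, T.not_isDiag_of_mem_edgeSet h1⟩
          simp only [Finset.coe_sdiff, Set.mem_diff, Finset.mem_coe,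
            SimpleGraph.mem_edgeFinset]
          exact ⟨h1, h2⟩
        exact ((path (ep e).1 (ep e).2).transfer G' hsub).reachable
    have key : ∀ u v : {p // p ∈ P}, Tstar.Adj u v → G'.Reachable u v := by
      intro u v huv
      have h := hmain s(u, v) huv
      have hepair := hep s(u, v)
      rw [Sym2.eq_iff] at hepair
      rcases hepair with ⟨h1, h2⟩ | ⟨h1, h2⟩
      · rw [h1, h2] at h; exact h
      · rw [h1, h2] at h; exact h.symm
    have hreach : ∀ (a b : {p // p ∈ P}), Tstar.Walk a b → G'.Reachable a b := by
      intro a b w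
      induction w with
      | nil => exact SimpleGraph.Reachable.refl _
      | cons h pp ih => exact (key _ _ h).trans ih
    have hconn : G'.Connected := by
      rw [SimpleGraph.connected_iff]
      refine ⟨fun a b => ?_, hne⟩
      obtain ⟨w⟩ := hTstar.isConnected.preconnected a b
      exact hreach a b w
    -- edge counting
    have hcount := connected_card_le_edges G' hconn
    have hsubE : G'.edgeFinset ⊆ (T.edgeFinset \ F) ∪ N := by
      intro x hx
      have hx' : x ∈ G'.edgeSet := SimpleGraph.mem_edgeFinset.mp hx
      rw [hG', SimpleGraph.edgeSet_fromEdgeSet] at hx'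
      obtain ⟨hxS, -⟩ := hx'
      rw [hS] at hxS
      rcases hxS with h | h
      · exact Finset.mem_union_left _ h
      · exact Finset.mem_union_right _ h
    have hcard1 : G'.edgeFinset.card ≤ (T.edgeFinset \ F).card + N.card :=
      le_trans (Finset.card_le_card hsubE) (Finset.card_union_le _ _)
    have hFsub : F ⊆ T.edgeFinset := by
      intro x hx
      obtain ⟨f, -, rfl⟩ := Finset.mem_image.mp hx
      exact f.2
    have hFcard : F.card = s.card := Finset.card_image_of_injective _ Subtype.val_injective
    have hTcard : T.edgeFinset.card + 1 = Fintype.card {p // p ∈ P} := hT.card_edgeFinset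
    have hsdiff : (T.edgeFinset \ F).card = T.edgeFinset.card - F.card :=
      Finset.card_sdiff_of_subset hFsub
    have hFle : F.card ≤ T.edgeFinset.card := Finset.card_le_card hFsub
    show s.card ≤ N.card
    omega
  -- apply Hall's theorem
  obtain ⟨σ, hσinj, hσmem⟩ :=
    (Finset.all_card_le_biUnion_card_iff_existsInjective'
      (fun f : {f // f ∈ T.edgeFinset} => t ↑f)).mp hall
  -- the per-edge bound
  have hbound : ∀ f : {f // f ∈ T.edgeFinset},
      edgeDist P ↑f ≤ (1 + 2 * ρ) * edgeDist P (σ f) := by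
    intro f
    obtain ⟨hmemstar, hmempath⟩ := Finset.mem_filter.mp (hσmem f)
    have hadj : Tstar.Adj (ep (σ f)).1 (ep (σ f)).2 := by
      rw [← SimpleGraph.mem_edgeSet, hep (σ f)]
      exact SimpleGraph.mem_edgeFinset.mp hmemstar
    have hb := happrox _ _ hadj (path (ep (σ f)).1 (ep (σ f)).2)
      (hpath (ep (σ f)).1 (ep (σ f)).2) ↑f hmempath
    have heq : edgeDist P (σ f) =
        dist ((ep (σ f)).1 : EuclideanSpace ℝ (Fin d))
          ((ep (σ f)).2 : EuclideanSpace ℝ (Fin d)) := by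
      conv_lhs => rw [← hep (σ f)]
      exact Sym2.lift_mk _ _ _
    rw [heq]
    exact hb
  have hc : (0:ℝ) ≤ 1 + 2 * ρ := by linarith
  calc ∑ e ∈ T.edgeFinset, edgeDist P e
      = ∑ f ∈ T.edgeFinset.attach, edgeDist P ↑f := (Finset.sum_attach _ _).symm
    _ ≤ ∑ f ∈ T.edgeFinset.attach, (1 + 2 * ρ) * edgeDist P (σ f) :=
        Finset.sum_le_sum (fun f _ => hbound f)
    _ = (1 + 2 * ρ) * ∑ f ∈ T.edgeFinset.attach, edgeDist P (σ f) := by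
        rw [Finset.mul_sum]
    _ ≤ (1 + 2 * ρ) * ∑ e ∈ Tstar.edgeFinset, edgeDist P e := by
        refine mul_le_mul_of_nonneg_left ?_ hc
        rw [← Finset.sum_image (fun x _ y _ h => hσinj h)]
        refine Finset.sum_le_sum_of_subset_of_nonneg ?_ (fun e _ _ => edgeDist_nonneg P e)
        intro x hx
        obtain ⟨f, -, rfl⟩ := Finset.mem_image.mp hx
        exact (Finset.mem_filter.mp (hσmem f)).1
end

section
/- Let d ≥ 1, let P be a finite set of n ≥ 2 distinct points in ℝ^d with Euclidean edge weights w({u,v}) = dist(u,v), let T* be a Euclidean minimum spanning tree of P, let ρ > 0, and let T be a spanning tree of the complete graph on P such that for every edge {u,v} of T*, every edge on the unique path in T from u to v has weight at most (1+2ρ)·dist(u,v). Enumerate the edges of T* in nondecreasing order of weight as e*_1, …, e*_{n−1}, and for 1 ≤ i ≤ n−1 let E_i be the set of edges of T lying on at least one of the T-paths joining the endpoints of e*_1, …, e*_i. Then for every 1 ≤ i ≤ n−1 there exists a subset E'_i ⊆ E_i with |E'_i| = i and ∑_{e ∈ E'_i} w(e) ≤ (1+2ρ)·∑_{k=1}^{i}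 w(e*_k). -/
open SimpleGraph

section ComponentCounting

variable {V : Type*} [Fintype V]

/-- Number of connected components. -/
noncomputable def nccAux (G : SimpleGraph V) : ℕ := Nat.card G.ConnectedComponent

lemma nccAux_le_of_le {G H : SimpleGraph V} (h : G ≤ H) : nccAux H ≤ nccAux G := by
  apply Nat.card_le_card_of_surjective (SimpleGraph.ConnectedComponent.map (Hom.ofLE h))
  intro c
  obtain ⟨v, hv⟩ := c.exists_rep
  exact ⟨G.connectedComponentMk v, by rw [← hv]; rfl⟩

lemma nccAux_bot : nccAux (⊥ : SimpleGraph V) = Fintype.card V := by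
  rw [← Nat.card_eq_fintype_card]
  refine (Nat.card_eq_of_bijective (⊥ : SimpleGraph V).connectedComponentMk ⟨?_, ?_⟩).symm
  · intro u v h
    exact (SimpleGraph.reachable_bot).mp (SimpleGraph.ConnectedComponent.eq.mp h)
  · intro c
    obtain ⟨v, hv⟩ := c.exists_rep
    exact ⟨v, hv⟩

lemma reachable_sup_single {G : SimpleGraph V} {x y u v : V}
    (h : (G ⊔ fromEdgeSet {s(x, y)}).Reachable u v) :
    G.Reachable u v ∨
      ((G.Reachable u x ∨ G.Reachable u y) ∧ (G.Reachable v x ∨ G.Reachable v y)) := by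
  obtain ⟨w⟩ := h
  induction w with
  | nil => exact Or.inl (Reachable.refl _)
  | @cons u' b v' h p ih =>
    rcases (SimpleGraph.sup_adj _ _ _ _).mp h with hG | hF
    · rcases ih with hl | ⟨hw, hv⟩
      · exact Or.inl (hG.reachable.trans hl)
      · exact Or.inr ⟨hw.imp (fun h' => hG.reachable.trans h') (fun h' => hG.reachable.trans h'), hv⟩
    · rw [SimpleGraph.fromEdgeSet_adj] at hF
      obtain ⟨he, hne⟩ := hF
      rw [Set.mem_singleton_iff, Sym2.eq_iff] at he
      refine Or.inr ⟨?_, ?_⟩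
      · rcases he with ⟨rfl, rfl⟩ | ⟨rfl, rfl⟩
        · exact Or.inl (Reachable.refl _)
        · exact Or.inr (Reachable.refl _)
      · rcases ih with hl | ⟨hw, hv⟩
        · rcases he with ⟨rfl, rfl⟩ | ⟨rfl, rfl⟩
          · exact Or.inr hl.symm
          · exact Or.inl hl.symm
        · exact hv

lemma reachable_of_reachable_sup {G F : SimpleGraph V}
    (hF : ∀ ⦃u v : V⦄, F.Adj u v → G.Reachable u v) {u v : V}
    (h : (G ⊔ F).Reachable u v) : G.Reachable u v := by
  obtain ⟨w⟩ := h
  induction w with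
  | nil => exact Reachable.refl _
  | @cons u' b v' h p ih =>
    rcases (SimpleGraph.sup_adj _ _ _ _).mp h with hG | hF'
    · exact hG.reachable.trans ih
    · exact (hF hF').trans ih

lemma nccAux_le_sup_single_add_one (G : SimpleGraph V) (x y : V) :
    nccAux G ≤ nccAux (G ⊔ fromEdgeSet {s(x, y)}) + 1 := by
  classical
  set J := G ⊔ fromEdgeSet {s(x, y)} with hJ
  have key : Nat.card G.ConnectedComponent ≤ Nat.card (Option J.ConnectedComponent) := by
    apply Nat.card_le_card_of_injective
      (fun c => if c = G.connectedComponentMk x then none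
        else some (c.map (Hom.ofLE (le_sup_left : G ≤ J))))
    intro c1 c2 hc
    simp only at hc
    by_cases h1 : c1 = G.connectedComponentMk x
    · by_cases h2 : c2 = G.connectedComponentMk x
      · exact h1.trans h2.symm
      · rw [if_pos h1, if_neg h2] at hc
        exact absurd hc (by simp)
    · by_cases h2 : c2 = G.connectedComponentMk x
      · rw [if_neg h1, if_pos h2] at hc
        exact absurd hc (by simp)
      · rw [if_neg h1, if_neg h2, Option.some_inj] at hc
        show c1 = c2
        obtain ⟨u, hu⟩ := c1.exists_rep
        obtain ⟨v, hv⟩ := c2.exists_rep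
        subst hu; subst hv
        have hr : J.Reachable u v := SimpleGraph.ConnectedComponent.eq.mp hc
        rcases reachable_sup_single hr with hl | ⟨hw, hv'⟩
        · exact SimpleGraph.ConnectedComponent.eq.mpr hl
        · have hu' : G.Reachable u y := by
            rcases hw with h' | h'
            · exact absurd (SimpleGraph.ConnectedComponent.eq.mpr h') h1
            · exact h'
          have hv'' : G.Reachable v y := by
            rcases hv' with h' | h'
            · exact absurd (SimpleGraph.ConnectedComponent.eq.mpr h') h2
            · exact h'
          exact SimpleGraph.ConnectedComponent.eq.mpr (hu'.trans hv''.symm)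
  simpa [nccAux, Finite.card_option] using key

lemma nccAux_sup_single_add_one_le (G : SimpleGraph V) {x y : V} (hxy : x ≠ y)
    (hnr : ¬G.Reachable x y) :
    nccAux (G ⊔ fromEdgeSet {s(x, y)}) + 1 ≤ nccAux G := by
  classical
  set J := G ⊔ fromEdgeSet {s(x, y)} with hJ
  set m : G.ConnectedComponent → J.ConnectedComponent :=
    SimpleGraph.ConnectedComponent.map (Hom.ofLE (le_sup_left : G ≤ J)) with hm
  have hmk : ∀ v : V, m (G.connectedComponentMk v) = J.connectedComponentMk v := fun _ => rfl
  have hsurj : Function.Surjective m := by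
    intro c
    obtain ⟨v, hv⟩ := c.exists_rep
    exact ⟨G.connectedComponentMk v, by rw [← hv]; rfl⟩
  obtain ⟨g, hg⟩ := hsurj.hasRightInverse
  have hginj : Function.Injective g := hg.injective
  have hadjJ : J.Adj x y := Or.inr (by rw [SimpleGraph.fromEdgeSet_adj]; exact ⟨rfl, hxy⟩)
  have hxyJ : m (G.connectedComponentMk x) = m (G.connectedComponentMk y) := by
    rw [hmk, hmk]
    exact SimpleGraph.ConnectedComponent.eq.mpr hadjJ.reachable
  have hne : G.connectedComponentMk x ≠ G.connectedComponentMk y := by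
    intro h
    exact hnr (SimpleGraph.ConnectedComponent.eq.mp h)
  have hmiss : ∃ z : V, G.connectedComponentMk z ∉ Set.range g := by
    by_cases hx : g (m (G.connectedComponentMk x)) = G.connectedComponentMk x
    · refine ⟨y, ?_⟩
      rintro ⟨c, hc⟩
      have hcm : c = m (G.connectedComponentMk y) := by
        rw [← hc]; exact (hg c).symm
      rw [hcm, ← hxyJ, hx] at hc
      exact hne hc
    · refine ⟨x, ?_⟩
      rintro ⟨c, hc⟩
      have hcm : c = m (G.connectedComponentMk x) := by
        rw [← hc]; exact (hg c).symm
      rw [hcm] at hc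
      exact hx hc
  obtain ⟨z, hz⟩ := hmiss
  have key : Nat.card (Option J.ConnectedComponent) ≤ Nat.card G.ConnectedComponent := by
    apply Nat.card_le_card_of_injective
      (fun c => Option.elim c (G.connectedComponentMk z) g)
    intro c1 c2 hc
    match c1, c2 with
    | none, none => rfl
    | none, some c => exact absurd ⟨c, hc.symm⟩ hz
    | some c, none => exact absurd ⟨c, hc⟩ hz
    | some c, some c' =>
      have hgc : g c = g c' := by simpa using hc
      rw [hginj hgc]
  simpa [nccAux, Finite.card_option] using key

lemma nccAux_le_sup_edge_add_one (G : SimpleGraph V) (e : Sym2 V) :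
    nccAux G ≤ nccAux (G ⊔ fromEdgeSet {e}) + 1 :=
  Sym2.ind (fun x y => nccAux_le_sup_single_add_one G x y) e

lemma card_le_nccAux_add_card (E : Finset (Sym2 V)) :
    Fintype.card V ≤ nccAux (fromEdgeSet (E : Set (Sym2 V))) + E.card := by
  classical
  induction E using Finset.induction_on with
  | empty => simp [nccAux_bot]
  | @insert e E hnm ih =>
    have hsplit : fromEdgeSet ((insert e E : Finset (Sym2 V)) : Set (Sym2 V)) =
        fromEdgeSet (E : Set (Sym2 V)) ⊔ fromEdgeSet {e} := by
      rw [Finset.coe_insert, Set.insert_eq, SimpleGraph.fromEdgeSet_union, sup_comm]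
    rw [hsplit, Finset.card_insert_of_notMem hnm]
    calc Fintype.card V ≤ nccAux (fromEdgeSet (E : Set (Sym2 V))) + E.card := ih
      _ ≤ (nccAux (fromEdgeSet (E : Set (Sym2 V)) ⊔ fromEdgeSet {e}) + 1) + E.card :=
          Nat.add_le_add_right (nccAux_le_sup_edge_add_one _ e) _
      _ = nccAux (fromEdgeSet (E : Set (Sym2 V)) ⊔ fromEdgeSet {e}) + (E.card + 1) := by omega

lemma nccAux_sup_edge_add_one_le (G : SimpleGraph V) {e : Sym2 V}
    (hnr : ∀ x y : V, s(x, y) = e → x ≠ y ∧ ¬G.Reachable x y) :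
    nccAux (G ⊔ fromEdgeSet {e}) + 1 ≤ nccAux G := by
  induction e using Sym2.ind with
  | _ x y =>
    obtain ⟨hxy, hr⟩ := hnr x y rfl
    exact nccAux_sup_single_add_one_le G hxy hr

lemma nccAux_add_card_le_card {A : SimpleGraph V} (hA : A.IsAcyclic) :
    ∀ E : Finset (Sym2 V), (E : Set (Sym2 V)) ⊆ A.edgeSet →
      nccAux (fromEdgeSet (E : Set (Sym2 V))) + E.card ≤ Fintype.card V := by
  classical
  intro E
  induction E using Finset.induction_on with
  | empty => intro _; simp [nccAux_bot]
  | @insert e E hnm ih =>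
    intro hsub
    have hsubE : (E : Set (Sym2 V)) ⊆ A.edgeSet := fun e' he' => hsub (by simp [he'])
    have heA : e ∈ A.edgeSet := hsub (by simp)
    have hsplit : fromEdgeSet ((insert e E : Finset (Sym2 V)) : Set (Sym2 V)) =
        fromEdgeSet (E : Set (Sym2 V)) ⊔ fromEdgeSet {e} := by
      rw [Finset.coe_insert, Set.insert_eq, SimpleGraph.fromEdgeSet_union, sup_comm]
    rw [hsplit, Finset.card_insert_of_notMem hnm]
    have hstep : nccAux (fromEdgeSet (E : Set (Sym2 V)) ⊔ fromEdgeSet {e}) + 1 ≤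
        nccAux (fromEdgeSet (E : Set (Sym2 V))) := by
      apply nccAux_sup_edge_add_one_le
      intro x y hxy
      subst hxy
      have hadjA : A.Adj x y := heA
      refine ⟨hadjA.ne, ?_⟩
      intro hr
      have hb : A.IsBridge s(x, y) :=
        (SimpleGraph.isAcyclic_iff_forall_adj_isBridge.mp hA) hadjA
      have hle : fromEdgeSet (E : Set (Sym2 V)) ≤ A \ fromEdgeSet {s(x, y)} := by
        intro u v huv
        rw [SimpleGraph.fromEdgeSet_adj] at huv
        obtain ⟨hmem, hne'⟩ := huv
        refine ⟨hsubE hmem, ?_⟩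
        rw [SimpleGraph.fromEdgeSet_adj]
        rintro ⟨hmem', -⟩
        rw [Set.mem_singleton_iff] at hmem'
        exact hnm (by rw [← hmem']; exact hmem)
      exact (SimpleGraph.isBridge_iff.mp hb) (hr.mono hle)
    have hih := ih hsubE
    omega

/-- Key counting lemma: if the endpoint pairs of an injective family of edges of an
acyclic graph indexed by `S` are each connected using only edges of `U`, then
`S.card ≤ U.card`. -/
lemma hall_condition_key {ι : Type*} [DecidableEq ι] (A : SimpleGraph V) (hA : A.IsAcyclic)
    (x y : ι → V) (hadj : ∀ k, A.Adj (x k) (y k))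
    (hinj : Function.Injective fun k => s(x k, y k))
    (S : Finset ι) (U : Finset (Sym2 V))
    (hreach : ∀ k ∈ S, (fromEdgeSet (U : Set (Sym2 V))).Reachable (x k) (y k)) :
    S.card ≤ U.card := by
  classical
  set SE : Finset (Sym2 V) := S.image fun k => s(x k, y k) with hSEdef
  have hSEcard : SE.card = S.card := Finset.card_image_of_injective S hinj
  set GU := fromEdgeSet (U : Set (Sym2 V)) with hGU
  set F := fromEdgeSet (SE : Set (Sym2 V)) with hF
  have h1 : nccAux F + SE.card ≤ Fintype.card V := by
    apply nccAux_add_card_le_card hA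
    intro e he
    rw [Finset.mem_coe, hSEdef, Finset.mem_image] at he
    obtain ⟨k, _, rfl⟩ := he
    exact (hadj k)
  have h2 : Fintype.card V ≤ nccAux GU + U.card := card_le_nccAux_add_card U
  have hFadj : ∀ ⦃u v : V⦄, F.Adj u v → GU.Reachable u v := by
    intro u v huv
    rw [hF, SimpleGraph.fromEdgeSet_adj] at huv
    obtain ⟨hmem, hne⟩ := huv
    rw [Finset.mem_coe, hSEdef, Finset.mem_image] at hmem
    obtain ⟨k, hk, hke⟩ := hmem
    rw [Sym2.eq_iff] at hke
    rcases hke with ⟨h1', h2'⟩ | ⟨h1', h2'⟩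
    · rw [← h1', ← h2']; exact hreach k hk
    · rw [← h1', ← h2']; exact (hreach k hk).symm
  have h3 : nccAux GU ≤ nccAux (GU ⊔ F) := by
    apply Nat.card_le_card_of_injective
      (SimpleGraph.ConnectedComponent.map (Hom.ofLE (le_sup_left : GU ≤ GU ⊔ F)))
    intro c1 c2 hc
    obtain ⟨u, hu⟩ := c1.exists_rep
    obtain ⟨v, hv⟩ := c2.exists_rep
    subst hu; subst hv
    have hr : (GU ⊔ F).Reachable u v := SimpleGraph.ConnectedComponent.eq.mp hc
    exact SimpleGraph.ConnectedComponent.eq.mpr (reachable_of_reachable_sup hFadj hr)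
  have h4 : nccAux (GU ⊔ F) ≤ nccAux F := nccAux_le_of_le le_sup_right
  omega

end ComponentCounting

open scoped Classical in
/-- With `T*` an EMST of `P` (`|P| = n ≥ 2`) whose edges are enumerated
in nondecreasing order of weight as `e*_k = {a k, b k}` (`k = 0, …, n-2`), and `T` a
spanning tree that edge-wise `(1+2ρ)`-approximates `T*`: for every `i` there is a set
`E'_i` of `i+1` edges of `T`, each lying on a `T`-path joining the endpoints of some
`e*_k` with `k ≤ i`, whose total weight is at most `(1+2ρ)·∑_{k ≤ i} w(e*_k)`. -/
theorem emst_prefix_charging (d n : ℕ) (hd : 1 ≤ d) (hn : 2 ≤ n)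
    (P : Finset (EuclideanSpace ℝ (Fin d))) (hcard : P.card = n)
    (Tstar T : SimpleGraph {p // p ∈ P})
    (hTstar : Tstar.IsTree) (hT : T.IsTree)
    (hmin : ∀ T' : SimpleGraph {p // p ∈ P}, T'.IsTree →
      ∑ e ∈ Tstar.edgeFinset, edgeDist P e ≤ ∑ e ∈ T'.edgeFinset, edgeDist P e)
    (ρ : ℝ) (hρ : 0 < ρ)
    (happrox : ∀ u v : {p // p ∈ P}, Tstar.Adj u v →
      ∀ p : T.Walk u v, p.IsPath → ∀ e ∈ p.edges,
        edgeDist P e ≤ (1 + 2 * ρ) *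
          dist (u : EuclideanSpace ℝ (Fin d)) (v : EuclideanSpace ℝ (Fin d)))
    (a b : Fin (n - 1) → {p // p ∈ P})
    (hadj : ∀ k, Tstar.Adj (a k) (b k))
    (hinj : Function.Injective fun k => s(a k, b k))
    (hsurj : ∀ e ∈ Tstar.edgeSet, ∃ k, s(a k, b k) = e)
    (hmono : ∀ k₁ k₂ : Fin (n - 1), k₁ ≤ k₂ →
      dist (a k₁ : EuclideanSpace ℝ (Fin d)) (b k₁ : EuclideanSpace ℝ (Fin d)) ≤
        dist (a k₂ : EuclideanSpace ℝ (Fin d)) (b k₂ : EuclideanSpace ℝ (Fin d))) :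
    ∀ i : Fin (n - 1),
      ∃ E' : Finset (Sym2 {p // p ∈ P}),
        E'.card = (i : ℕ) + 1 ∧
        (∀ e ∈ E', e ∈ T.edgeSet ∧
          ∃ k : Fin (n - 1), k ≤ i ∧ ∃ p : T.Walk (a k) (b k), p.IsPath ∧ e ∈ p.edges) ∧
        ∑ e ∈ E', edgeDist P e ≤ (1 + 2 * ρ) *
          ∑ k ∈ Finset.univ.filter (fun k : Fin (n - 1) => k ≤ i),
            dist (a k : EuclideanSpace ℝ (Fin d)) (b k : EuclideanSpace ℝ (Fin d)) := by
  classical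
  -- choose a path in `T` between the endpoints of each edge of `T*`
  have hreach : ∀ k : Fin (n - 1), T.Reachable (a k) (b k) := fun k =>
    hT.isConnected.preconnected (a k) (b k)
  let pk : ∀ k : Fin (n - 1), T.Path (a k) (b k) := fun k =>
    (Classical.choice (hreach k)).toPath
  let t : Fin (n - 1) → Finset (Sym2 {p // p ∈ P}) := fun k => (pk k).1.edges.toFinset
  -- Hall's condition
  have hall : ∀ S : Finset (Fin (n - 1)), S.card ≤ (S.biUnion t).card := by
    intro S
    apply hall_condition_key Tstar hTstar.IsAcyclic a b hadj hinj S (S.biUnion t)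
    intro k hk
    refine ⟨((pk k).1.transfer _ ?_)⟩
    intro e he
    rw [SimpleGraph.edgeSet_fromEdgeSet]
    constructor
    · rw [Finset.mem_coe, Finset.mem_biUnion]
      exact ⟨k, hk, List.mem_toFinset.mpr he⟩
    · exact SimpleGraph.not_isDiag_of_mem_edgeSet T
        ((pk k).1.edges_subset_edgeSet he)
  obtain ⟨f, hfinj, hfmem⟩ := (Finset.all_card_le_biUnion_card_iff_exists_injective t).mp hall
  intro i
  set K : Finset (Fin (n - 1)) := Finset.univ.filter (fun k : Fin (n - 1) => k ≤ i) with hK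
  have hKIic : K = Finset.Iic i := by
    ext k
    simp [hK, Finset.mem_Iic]
  refine ⟨K.image f, ?_, ?_, ?_⟩
  · rw [Finset.card_image_of_injective K hfinj, hKIic, Fin.card_Iic]
  · intro e he
    rw [Finset.mem_image] at he
    obtain ⟨k, hk, rfl⟩ := he
    have hki : k ≤ i := (Finset.mem_filter.mp hk).2
    have hedge : f k ∈ (pk k).1.edges := List.mem_toFinset.mp (hfmem k)
    exact ⟨(pk k).1.edges_subset_edgeSet hedge,
      k, hki, (pk k).1, (pk k).2, hedge⟩
  · rw [Finset.sum_image (fun k₁ _ k₂ _ h => hfinj h), Finset.mul_sum]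
    apply Finset.sum_le_sum
    intro k _
    exact happrox (a k) (b k) (hadj k) (pk k).1 (pk k).2 (f k)
      (List.mem_toFinset.mp (hfmem k))
end
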